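/- arXiv:1210.7447 — 3 statements merged into one kernel-verified Lean document; each statement's English description precedes it below -/
import Mathlib

section
/- Let A and B be N×N real matrices satisfying e^{hA} = e^{hB} for some h > 0. If every eigenvalue λ of A and of B satisfies |Im λ| < π/h, then A = B. -/
section PolyPart
open Polynomial Finset

noncomputable def pexpP (D : ℕ) : Polynomial ℂ :=
  ∑ k ∈ Finset.range D, Polynomial.C ((k.factorial : ℂ)⁻¹) * Polynomial.X ^ k

noncomputable def plogP (D : ℕ) : Polynomial ℂ :=
  ∑ k ∈ Finset.range D, Polynomial.C ((-1 : ℂ)^k / (k+1)) * Polynomial.X ^ (k+1)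

lemma X_pow_succ_dvd_of_derivative {F : Polynomial ℂ} {m : ℕ} (h0 : F.coeff 0 = 0)
    (hd : X ^ m ∣ derivative F) : X ^ (m+1) ∣ F := by
  rw [X_pow_dvd_iff] at hd ⊢
  intro d hdm
  rcases d with _ | j
  · exact h0
  · have hc := hd j (by omega)
    rw [coeff_derivative] at hc
    have hj : ((j : ℂ) + 1) ≠ 0 := Nat.cast_add_one_ne_zero j
    exact (mul_eq_zero.mp hc).resolve_right hj

lemma derivative_pexpP (D : ℕ) : derivative (pexpP (D+1)) = pexpP D := by
  unfold pexpP
  rw [map_sum, Finset.sum_range_succ']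
  have h0 : derivative (C ((Nat.factorial 0 : ℂ)⁻¹) * X ^ 0) = 0 := by simp
  rw [h0, add_zero]
  refine Finset.sum_congr rfl fun i _ => ?_
  rw [derivative_C_mul_X_pow, Nat.add_sub_cancel]
  congr 1
  rw [Nat.factorial_succ]
  push_cast
  rw [mul_comm ((i:ℂ)+1), mul_inv]
  field_simp

lemma derivative_plogP (D : ℕ) :
    derivative (plogP D) = ∑ k ∈ Finset.range D, (-X : Polynomial ℂ)^k := by
  unfold plogP
  rw [map_sum]
  refine Finset.sum_congr rfl fun k _ => ?_
  rw [derivative_C_mul_X_pow, Nat.add_sub_cancel]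
  have hc : ((-1 : ℂ)^k / ((k:ℂ)+1) * (((k:ℕ)+1 : ℕ) : ℂ)) = (-1:ℂ)^k := by
    push_cast
    exact div_mul_cancel₀ _ (Nat.cast_add_one_ne_zero k)
  rw [hc]
  calc C ((-1:ℂ)^k) * X^k = ((C (-1:ℂ))^k) * X^k := by rw [map_pow]
    _ = ((-1 : Polynomial ℂ)^k) * X^k := by rw [map_neg, map_one]
    _ = ((-1 : Polynomial ℂ) * X)^k := by rw [mul_pow]
    _ = (-X)^k := by rw [neg_one_mul]

lemma geom_neg (D : ℕ) :
    (∑ k ∈ Finset.range D, (-X : Polynomial ℂ)^k) * (1 + X) = 1 - (-X)^D := by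
  have h := geom_sum_mul (-X : Polynomial ℂ) D
  have h2 : (-X - 1 : Polynomial ℂ) = -(1 + X) := by ring
  rw [h2, mul_neg] at h
  have := congrArg Neg.neg h
  rw [neg_neg] at this
  rw [this]; ring

lemma pexpP_succ (m : ℕ) :
    pexpP (m+1) = pexpP m + C ((m.factorial : ℂ)⁻¹) * X ^ m := by
  unfold pexpP; rw [Finset.sum_range_succ]

lemma eval_zero_pexpP (D : ℕ) (hD : 1 ≤ D) : (pexpP D).eval 0 = 1 := by
  unfold pexpP
  rw [eval_finset_sum]
  rw [Finset.sum_eq_single 0]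
  · simp
  · intro k _ hk; simp [zero_pow hk]
  · intro habs; exact absurd (Finset.mem_range.mpr (by omega)) habs

lemma eval_zero_plogP (D : ℕ) : (plogP D).eval 0 = 0 := by
  unfold plogP
  rw [eval_finset_sum]
  refine Finset.sum_eq_zero fun k _ => ?_
  simp

lemma plogP_comp (D : ℕ) (hD : 1 ≤ D) :
    ∃ c : Polynomial ℂ, (plogP D).comp (pexpP D - 1) = X + X ^ D * c := by
  obtain ⟨m, rfl⟩ : ∃ m, D = m + 1 := ⟨D - 1, by omega⟩
  set x : Polynomial ℂ := pexpP (m+1) - 1 with hxdef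
  have hx : (X : Polynomial ℂ) ∣ x := by
    rw [X_dvd_iff, coeff_sub, coeff_zero_eq_eval_zero, eval_zero_pexpP _ (by omega)]
    simp
  suffices h : X ^ (m+1) ∣ (plogP (m+1)).comp x - X by
    obtain ⟨c, hc⟩ := h
    exact ⟨c, by linear_combination hc⟩
  apply X_pow_succ_dvd_of_derivative
  · rw [coeff_sub, coeff_zero_eq_eval_zero, coeff_zero_eq_eval_zero, eval_comp]
    have hx0 : x.eval 0 = 0 := by
      rw [hxdef]; simp [eval_zero_pexpP _ (Nat.le_add_left 1 m)]
    rw [hx0, eval_zero_plogP]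
    simp
  · set G : Polynomial ℂ := ∑ k ∈ Finset.range (m+1), (-X)^k with hGdef
    have hdx : derivative x = pexpP (m+1) - C ((m.factorial : ℂ)⁻¹) * X ^ m := by
      rw [hxdef, derivative_sub, derivative_one, sub_zero, derivative_pexpP, pexpP_succ]
      ring
    have hgeo : G.comp x * pexpP (m+1) = 1 - (-x)^(m+1) := by
      have h1 := congrArg (fun p => p.comp x) (geom_neg (m+1))
      simp only [mul_comp, add_comp, one_comp, X_comp, sub_comp, neg_comp, pow_comp] at h1
      rw [← hGdef] at h1
      have h2 : (1 : Polynomial ℂ) + x = pexpP (m+1) := by rw [hxdef]; ring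
      rw [h2] at h1
      exact h1
    rw [derivative_sub, derivative_X, derivative_comp, derivative_plogP, ← hGdef, hdx]
    have expand : (pexpP (m+1) - C ((m.factorial : ℂ)⁻¹) * X ^ m) * G.comp x - 1
        = -((-x)^(m+1)) - C ((m.factorial : ℂ)⁻¹) * X ^ m * G.comp x := by
      have : pexpP (m+1) * G.comp x = 1 - (-x)^(m+1) := by
        rw [mul_comm]; exact hgeo
      linear_combination this
    rw [expand]
    have hxd : (X : Polynomial ℂ)^m ∣ (-x)^(m+1) := by
      have h1 : (X : Polynomial ℂ)^m ∣ X^(m+1) := pow_dvd_pow X (by omega)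
      have h2 : (X : Polynomial ℂ)^(m+1) ∣ (-x)^(m+1) := pow_dvd_pow_of_dvd (hx.neg_right) (m+1)
      exact h1.trans h2
    exact dvd_sub hxd.neg_right ((dvd_mul_left (X^m) (C ((m.factorial : ℂ)⁻¹))).mul_right (G.comp x))

end PolyPart

open NormedSpace Matrix

section MatrixPart
variable {n : ℕ}

attribute [local instance] Matrix.linftyOpNormedAddCommGroup Matrix.linftyOpNormedRing
  Matrix.linftyOpNormedAlgebra

noncomputable def evCLM (v : Fin n → ℂ) : Matrix (Fin n) (Fin n) ℂ →L[ℂ] (Fin n → ℂ) :=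
  LinearMap.toContinuousLinearMap
    { toFun := fun M => M.mulVec v
      map_add' := fun M N => Matrix.add_mulVec M N v
      map_smul' := fun a M => Matrix.smul_mulVec a M v }

lemma evCLM_apply (v : Fin n → ℂ) (M : Matrix (Fin n) (Fin n) ℂ) :
    evCLM v M = M.mulVec v := rfl

lemma mulVec_exp (M : Matrix (Fin n) (Fin n) ℂ) (v : Fin n → ℂ) :
    (exp M).mulVec v = ∑' k : ℕ, ((k.factorial : ℂ)⁻¹) • ((M^k).mulVec v) := by
  have hs : Summable (fun k : ℕ => ((k.factorial : ℂ)⁻¹) • M^k) :=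
    NormedSpace.expSeries_summable' (𝕂 := ℂ) M
  have h := (evCLM v).map_tsum hs
  rw [exp_eq_tsum ℂ, ← evCLM_apply, h]
  refine tsum_congr fun k => ?_
  rw [_root_.map_smul, evCLM_apply]

lemma mulVec_exp_trunc (M : Matrix (Fin n) (Fin n) ℂ) (v : Fin n → ℂ) (D : ℕ)
    (hD : (M ^ D).mulVec v = 0) :
    (exp M).mulVec v = ∑ k ∈ Finset.range D, ((k.factorial : ℂ)⁻¹) • ((M^k).mulVec v) := by
  rw [mulVec_exp]
  refine tsum_eq_sum ?_
  intro k hk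
  have hkD : D ≤ k := by simpa using hk
  have hMk : M^k = M^(k-D) * M^D := by rw [← pow_add]; congr 1; omega
  rw [hMk, ← Matrix.mulVec_mulVec, hD, Matrix.mulVec_zero, smul_zero]

lemma exp_smul_one (lam : ℂ) :
    exp (lam • (1 : Matrix (Fin n) (Fin n) ℂ)) = Complex.exp lam • 1 := by
  rw [← Algebra.algebraMap_eq_smul_one]
  erw [← algebraMap_exp_comm]
  rw [← Complex.exp_eq_exp_ℂ,
    Algebra.algebraMap_eq_smul_one]

lemma exp_eq_smul_exp_sub (M : Matrix (Fin n) (Fin n) ℂ) (lam : ℂ) :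
    exp M = Complex.exp lam • exp (M - lam • 1) := by
  have hc : Commute (lam • (1 : Matrix (Fin n) (Fin n) ℂ)) (M - lam • 1) :=
    (Commute.one_left _).smul_left lam
  have h1 : M = lam • 1 + (M - lam • 1) := by abel
  calc exp M = exp (lam • (1 : Matrix (Fin n) (Fin n) ℂ)) * exp (M - lam • 1) := by
        erw [← exp_add_of_commute_of_mem_ball (𝕂 := ℂ) (𝔸 := Matrix (Fin n) (Fin n) ℂ) hc ((expSeries_radius_eq_top ℂ (Matrix (Fin n) (Fin n) ℂ)).symm ▸ edist_lt_top _ _) ((expSeries_radius_eq_top ℂ (Matrix (Fin n) (Fin n) ℂ)).symm ▸ edist_lt_top _ _), ← h1]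
        rfl
    _ = Complex.exp lam • exp (M - lam • 1) := by
        rw [exp_smul_one, smul_mul_assoc, one_mul]


lemma exp_sub_one_pow_mulVec (Nm : Matrix (Fin n) (Fin n) ℂ) :
    ∀ (k : ℕ) (v : Fin n → ℂ), (Nm^k).mulVec v = 0 → ((exp Nm - 1)^k).mulVec v = 0 := by
  intro k
  induction k with
  | zero => intro v hv; simpa using hv
  | succ k ih =>
    intro v hv
    set w := (exp Nm - 1).mulVec v with hw
    have hcom : Commute (exp Nm) (Nm ^ k) := ((Commute.refl Nm).pow_right k).exp_left
    have hu : ∀ j : ℕ, 1 ≤ j → (Nm ^ j).mulVec ((Nm^k).mulVec v) = 0 := by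
      intro j hj
      rw [Matrix.mulVec_mulVec, ← pow_add]
      have : j + k = (j - 1) + (k + 1) := by omega
      rw [this, pow_add, ← Matrix.mulVec_mulVec, hv, Matrix.mulVec_zero]
    have hkw : (Nm^k).mulVec w = 0 := by
      have h1 : (Nm^k).mulVec w
          = (exp Nm).mulVec ((Nm^k).mulVec v) - (Nm^k).mulVec v := by
        rw [hw, Matrix.mulVec_mulVec, Matrix.mul_sub, Matrix.mul_one, Matrix.sub_mulVec,
          hcom.symm.eq, ← Matrix.mulVec_mulVec]
      have h2 : (exp Nm).mulVec ((Nm^k).mulVec v) = (Nm^k).mulVec v := by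
        rw [mulVec_exp]
        rw [tsum_eq_sum (s := Finset.range 1) ?_]
        · simp
        · intro j hj
          have hj1 : 1 ≤ j := by simp only [Finset.mem_range, Nat.lt_one_iff] at hj; omega
          rw [Matrix.mulVec_mulVec, ← Matrix.mulVec_mulVec, hu j hj1, smul_zero]
      rw [h1, h2, sub_self]
    have := ih w hkw
    rw [pow_succ, ← Matrix.mulVec_mulVec]
    exact this

open Module End in
lemma maxGE_le_maxGE_exp (M : Matrix (Fin n) (Fin n) ℂ) (lam : ℂ) :
    Module.End.maxGenEigenspace (Matrix.toLinAlgEquiv' M) lam ≤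
      Module.End.maxGenEigenspace (Matrix.toLinAlgEquiv' (exp M)) (Complex.exp lam) := by
  intro v hv
  rw [Module.End.mem_maxGenEigenspace] at hv ⊢
  obtain ⟨k, hk⟩ := hv
  refine ⟨k, ?_⟩
  have key : ∀ (Z : Matrix (Fin n) (Fin n) ℂ) (mu : ℂ) (j : ℕ) (u : Fin n → ℂ),
      ((Matrix.toLinAlgEquiv' Z - mu • 1)^j) u = ((Z - mu • 1)^j).mulVec u := by
    intro Z mu j u
    have h1 : Matrix.toLinAlgEquiv' Z - mu • 1
        = Matrix.toLinAlgEquiv' (Z - mu • (1 : Matrix (Fin n) (Fin n) ℂ)) := by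
      rw [map_sub, _root_.map_smul, _root_.map_one]
    rw [h1, ← map_pow]
    exact Matrix.toLinAlgEquiv'_apply _ u
  rw [key] at hk
  rw [key]
  set Nm := M - lam • (1 : Matrix (Fin n) (Fin n) ℂ) with hNm
  have hsub : exp M - Complex.exp lam • (1 : Matrix (Fin n) (Fin n) ℂ)
      = Complex.exp lam • (exp Nm - 1) := by
    rw [smul_sub, ← exp_eq_smul_exp_sub]
  rw [hsub, smul_pow, Matrix.smul_mulVec, exp_sub_one_pow_mulVec Nm k v hk, smul_zero]

open Module End in
lemma mem_spectrum_of_maxGE_ne_bot (M : Matrix (Fin n) (Fin n) ℂ) (lam : ℂ)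
    (h : Module.End.maxGenEigenspace (Matrix.toLinAlgEquiv' M) lam ≠ ⊥) :
    lam ∈ spectrum ℂ M := by
  have hev : Module.End.HasEigenvalue (Matrix.toLinAlgEquiv' M) lam := by
    apply Module.End.hasEigenvalue_of_hasGenEigenvalue
      (k := Module.finrank ℂ (Fin n → ℂ))
    rw [Module.End.hasGenEigenvalue_iff,
      ← Module.End.maxGenEigenspace_eq_genEigenspace_finrank]
    exact h
  have := Module.End.hasEigenvalue_iff_mem_spectrum.mp hev
  rwa [AlgEquiv.spectrum_eq] at this

open Module End in
lemma pow_mulVec_eq_zero_of_mem_maxGE (M : Matrix (Fin n) (Fin n) ℂ) (lam : ℂ)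
    (v : Fin n → ℂ) (hv : v ∈ Module.End.maxGenEigenspace (Matrix.toLinAlgEquiv' M) lam) :
    ((M - lam • 1)^n).mulVec v = 0 := by
  rw [Module.End.maxGenEigenspace_eq_genEigenspace_finrank,
    Module.End.mem_genEigenspace_nat, LinearMap.mem_ker] at hv
  have key : ((Matrix.toLinAlgEquiv' M - lam • 1)^(Module.finrank ℂ (Fin n → ℂ))) v
      = ((M - lam • 1)^(Module.finrank ℂ (Fin n → ℂ))).mulVec v := by
    have h1 : Matrix.toLinAlgEquiv' M - lam • 1
        = Matrix.toLinAlgEquiv' (M - lam • (1 : Matrix (Fin n) (Fin n) ℂ)) := by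
      rw [map_sub, _root_.map_smul, _root_.map_one]
    rw [h1, ← map_pow]
    exact Matrix.toLinAlgEquiv'_apply _ v
  rw [key] at hv
  simp only [Module.finrank_fin_fun] at hv
  exact hv


lemma strip_exp_inj {x y : ℂ} (hx : |x.im| < Real.pi) (hy : |y.im| < Real.pi)
    (h : Complex.exp x = Complex.exp y) : x = y := by
  obtain ⟨k, hk⟩ := Complex.exp_eq_exp_iff_exists_int.mp h
  have him : x.im = y.im + (k : ℝ) * (2 * Real.pi) := by
    have := congrArg Complex.im hk
    simpa [Complex.add_im, Complex.mul_im, Complex.mul_re] using this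
  have hpi : (0:ℝ) < Real.pi := Real.pi_pos
  have habs : |(k:ℝ)| * (2 * Real.pi) < 2 * Real.pi := by
    have h1 : |x.im - y.im| ≤ |x.im| + |y.im| := abs_sub _ _
    have h2 : x.im - y.im = (k:ℝ) * (2 * Real.pi) := by linarith
    have h3 : |(k:ℝ) * (2*Real.pi)| = |(k:ℝ)| * (2*Real.pi) := by
      rw [abs_mul, abs_of_pos (by linarith : (0:ℝ) < 2*Real.pi)]
    calc |(k:ℝ)| * (2*Real.pi) = |(k:ℝ)*(2*Real.pi)| := h3.symm
      _ = |x.im - y.im| := by rw [h2]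
      _ ≤ |x.im| + |y.im| := h1
      _ < 2 * Real.pi := by linarith
  have hk1 : |(k:ℝ)| < 1 := by
    have h2pi : (0:ℝ) < 2 * Real.pi := by linarith
    nlinarith [abs_nonneg (k:ℝ)]
  have hk0 : k = 0 := by
    rw [← Int.cast_abs] at hk1
    have h4 : |k| < 1 := by exact_mod_cast hk1
    have h5 : 0 ≤ |k| := abs_nonneg k
    have h6 : |k| = 0 := by omega
    exact abs_eq_zero.mp h6
  rw [hk0] at hk
  simpa using hk

open Module.End in
lemma maxGE_le_of_exp_eq (A B : Matrix (Fin n) (Fin n) ℂ)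
    (hA : ∀ μ ∈ spectrum ℂ A, |μ.im| < Real.pi)
    (hB : ∀ μ ∈ spectrum ℂ B, |μ.im| < Real.pi)
    (hE : exp A = exp B) (lam : ℂ) :
    maxGenEigenspace (Matrix.toLinAlgEquiv' A) lam ≤
      maxGenEigenspace (Matrix.toLinAlgEquiv' B) lam := by
  by_cases hbot : maxGenEigenspace (Matrix.toLinAlgEquiv' A) lam = ⊥
  · rw [hbot]; exact bot_le
  have hlam : |lam.im| < Real.pi := hA lam (mem_spectrum_of_maxGE_ne_bot A lam hbot)
  intro v hv
  have hv1 : v ∈ maxGenEigenspace (Matrix.toLinAlgEquiv' (exp B)) (Complex.exp lam) := by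
    rw [← hE]; exact maxGE_le_maxGE_exp A lam hv
  have htop : v ∈ ⨆ mu, maxGenEigenspace (Matrix.toLinAlgEquiv' B) mu := by
    rw [Module.End.iSup_maxGenEigenspace_eq_top]; trivial
  have hsup : (⨆ mu, maxGenEigenspace (Matrix.toLinAlgEquiv' B) mu) ≤
      maxGenEigenspace (Matrix.toLinAlgEquiv' B) lam ⊔
        ⨆ mu ∈ {mu : ℂ | mu ≠ lam}, maxGenEigenspace (Matrix.toLinAlgEquiv' B) mu := by
    refine iSup_le fun mu => ?_
    by_cases hmu : mu = lam
    · subst hmu; exact le_sup_left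
    · exact le_trans
        (le_iSup₂ (f := fun (mu : ℂ) (_ : mu ∈ {mu : ℂ | mu ≠ lam}) =>
          maxGenEigenspace (Matrix.toLinAlgEquiv' B) mu) mu hmu) le_sup_right
  obtain ⟨u, hu, w, hw, huw⟩ := Submodule.mem_sup.mp (hsup htop)
  have hW : (⨆ mu ∈ {mu : ℂ | mu ≠ lam}, maxGenEigenspace (Matrix.toLinAlgEquiv' B) mu) ≤
      ⨆ c ∈ {c : ℂ | c ≠ Complex.exp lam},
        maxGenEigenspace (Matrix.toLinAlgEquiv' (exp B)) c := by
    refine iSup₂_le fun mu hmu => ?_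
    by_cases hbot2 : maxGenEigenspace (Matrix.toLinAlgEquiv' B) mu = ⊥
    · rw [hbot2]; exact bot_le
    · have hmu2 : |mu.im| < Real.pi := hB mu (mem_spectrum_of_maxGE_ne_bot B mu hbot2)
      have hne : Complex.exp mu ∈ {c : ℂ | c ≠ Complex.exp lam} :=
        fun hc => hmu (strip_exp_inj hmu2 hlam hc)
      exact le_trans (maxGE_le_maxGE_exp B mu)
        (le_iSup₂ (f := fun (c : ℂ) (_ : c ∈ {c : ℂ | c ≠ Complex.exp lam}) =>
          maxGenEigenspace (Matrix.toLinAlgEquiv' (exp B)) c) (Complex.exp mu) hne)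
  have hdisj : Disjoint
      (maxGenEigenspace (Matrix.toLinAlgEquiv' (exp B)) (Complex.exp lam))
      (⨆ c ∈ {c : ℂ | c ≠ Complex.exp lam},
        maxGenEigenspace (Matrix.toLinAlgEquiv' (exp B)) c) :=
    (Module.End.independent_maxGenEigenspace _).disjoint_biSup (by simp)
  have hw0 : w = 0 := by
    have hwmem : w ∈ maxGenEigenspace (Matrix.toLinAlgEquiv' (exp B)) (Complex.exp lam) := by
      have hwv : w = v - u := by rw [← huw]; abel
      rw [hwv]
      exact Submodule.sub_mem _ hv1 (by rw [← hE]; exact hE ▸ maxGE_le_maxGE_exp B lam hu)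
    exact Submodule.disjoint_def.mp hdisj w hwmem (hW hw)
  have hvu : v = u := by rw [← huw, hw0, add_zero]
  rwa [hvu]


open Polynomial in
lemma commute_aeval {A : Type*} [Ring A] [Algebra ℂ A] {a b : A} (h : Commute a b)
    (p : Polynomial ℂ) : Commute (aeval a p) b := by
  induction p using Polynomial.induction_on with
  | C c => rw [aeval_C]; exact Algebra.commute_algebraMap_left c b
  | add p q hp hq => rw [map_add]; exact hp.add_left hq
  | monomial m c ih =>
    rw [_root_.map_mul, aeval_C, map_pow, aeval_X]
    exact (Algebra.commute_algebraMap_left c b).mul_left (h.pow_left (m+1))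

open Polynomial in
lemma aeval_pexpP (M : Matrix (Fin n) (Fin n) ℂ) (D : ℕ) :
    aeval M (pexpP D) = ∑ k ∈ Finset.range D, ((k.factorial : ℂ)⁻¹) • M ^ k := by
  unfold pexpP
  rw [map_sum]
  refine Finset.sum_congr rfl fun k _ => ?_
  rw [_root_.map_mul, aeval_C, map_pow, aeval_X, ← Algebra.smul_def]

open Polynomial Module.End in
lemma mulVec_eq_on_maxGE (A B : Matrix (Fin n) (Fin n) ℂ) (hn : 1 ≤ n) (lam : ℂ)
    (hE : exp A = exp B)
    (hGE : maxGenEigenspace (Matrix.toLinAlgEquiv' A) lam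
      = maxGenEigenspace (Matrix.toLinAlgEquiv' B) lam)
    (v : Fin n → ℂ) (hv : v ∈ maxGenEigenspace (Matrix.toLinAlgEquiv' A) lam) :
    A.mulVec v = B.mulVec v := by
  set Na := A - lam • (1 : Matrix (Fin n) (Fin n) ℂ) with hNa
  set Nb := B - lam • (1 : Matrix (Fin n) (Fin n) ℂ) with hNb
  have hva : (Na ^ n).mulVec v = 0 := pow_mulVec_eq_zero_of_mem_maxGE A lam v hv
  have hvb : (Nb ^ n).mulVec v = 0 :=
    pow_mulVec_eq_zero_of_mem_maxGE B lam v (hGE ▸ hv)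
  have hEE : exp Na = exp Nb := by
    have h1 := exp_eq_smul_exp_sub A lam
    have h2 := exp_eq_smul_exp_sub B lam
    rw [hE, h2] at h1
    exact (smul_right_injective _ (Complex.exp_ne_zero lam) h1.symm)
  set Y : Matrix (Fin n) (Fin n) ℂ := exp Na - 1 with hY
  have base : ∀ Nm : Matrix (Fin n) (Fin n) ℂ, (Nm ^ n).mulVec v = 0 →
      (exp Nm - 1).mulVec v = (aeval Nm (pexpP n - 1)).mulVec v := by
    intro Nm hNm
    have hsum : (aeval Nm (pexpP n)).mulVec v
        = ∑ k ∈ Finset.range n, ((k.factorial:ℂ)⁻¹) • ((Nm^k).mulVec v) := by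
      rw [aeval_pexpP, ← evCLM_apply, map_sum]
      exact Finset.sum_congr rfl fun k _ => by rw [_root_.map_smul, evCLM_apply]
    rw [map_sub, _root_.map_one, Matrix.sub_mulVec, Matrix.sub_mulVec, Matrix.one_mulVec,
      mulVec_exp_trunc Nm v n hNm, hsum]
  have claimA : ∀ (Nm : Matrix (Fin n) (Fin n) ℂ), (Nm ^ n).mulVec v = 0 →
      exp Nm - 1 = Y → ∀ k : ℕ,
      (Y ^ k).mulVec v = (aeval Nm ((pexpP n - 1) ^ k)).mulVec v := by
    intro Nm hNm hYm k
    induction k with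
    | zero => simp
    | succ k ih =>
      have hcomm : Commute (aeval Nm (pexpP n - 1)) Y := by
        rw [← hYm]
        exact commute_aeval
          (((Commute.refl Nm).exp_right).sub_right (Commute.one_right Nm)) _
      calc (Y ^ (k+1)).mulVec v = (Y ^ k * Y).mulVec v := by rw [pow_succ]
        _ = (Y ^ k).mulVec (Y.mulVec v) := by rw [Matrix.mulVec_mulVec]
        _ = (Y ^ k).mulVec ((aeval Nm (pexpP n - 1)).mulVec v) := by
              rw [← hYm, base Nm hNm]
        _ = (Y ^ k * aeval Nm (pexpP n - 1)).mulVec v := by rw [Matrix.mulVec_mulVec]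
        _ = (aeval Nm (pexpP n - 1) * Y ^ k).mulVec v := by rw [(hcomm.pow_right k).symm.eq]
        _ = (aeval Nm (pexpP n - 1)).mulVec ((Y ^ k).mulVec v) := by
              rw [Matrix.mulVec_mulVec]
        _ = (aeval Nm (pexpP n - 1)).mulVec ((aeval Nm ((pexpP n - 1) ^ k)).mulVec v) := by
              rw [ih]
        _ = (aeval Nm (pexpP n - 1) * aeval Nm ((pexpP n - 1) ^ k)).mulVec v := by
              rw [Matrix.mulVec_mulVec]
        _ = (aeval Nm ((pexpP n - 1) ^ (k+1))).mulVec v := by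
              rw [← _root_.map_mul, ← pow_succ']
  have claimA' : ∀ (Nm : Matrix (Fin n) (Fin n) ℂ), (Nm ^ n).mulVec v = 0 →
      exp Nm - 1 = Y → ∀ q : Polynomial ℂ,
      (aeval Y q).mulVec v = (aeval Nm (q.comp (pexpP n - 1))).mulVec v := by
    intro Nm hNm hYm q
    have e1 : (aeval Y q).mulVec v
        = ∑ k ∈ Finset.range (q.natDegree+1), q.coeff k • ((Y^k).mulVec v) := by
      rw [aeval_eq_sum_range, ← evCLM_apply, map_sum]
      exact Finset.sum_congr rfl fun k _ => by rw [_root_.map_smul, evCLM_apply]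
    have e2 : (aeval Nm (q.comp (pexpP n - 1))).mulVec v
        = ∑ k ∈ Finset.range (q.natDegree+1),
            q.coeff k • ((aeval Nm ((pexpP n - 1)^k)).mulVec v) := by
      rw [aeval_comp, aeval_eq_sum_range, ← evCLM_apply, map_sum]
      exact Finset.sum_congr rfl fun k _ => by
        rw [_root_.map_smul, evCLM_apply, ← map_pow]
    rw [e1, e2]
    exact Finset.sum_congr rfl fun k _ => by rw [claimA Nm hNm hYm k]
  obtain ⟨c, hc⟩ := plogP_comp n hn
  have hnil : ∀ (Nm : Matrix (Fin n) (Fin n) ℂ), (Nm ^ n).mulVec v = 0 →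
      exp Nm - 1 = Y → Nm.mulVec v = (aeval Y (plogP n)).mulVec v := by
    intro Nm hNm hYm
    rw [claimA' Nm hNm hYm (plogP n), hc, map_add, Matrix.add_mulVec]
    have hzero : (aeval Nm (X ^ n * c)).mulVec v = 0 := by
      rw [mul_comm, _root_.map_mul, map_pow, aeval_X, ← Matrix.mulVec_mulVec, hNm,
        Matrix.mulVec_zero]
    rw [hzero, add_zero, aeval_X]
  have hfin : Na.mulVec v = Nb.mulVec v := by
    rw [hnil Na hva rfl, hnil Nb hvb (by rw [← hEE])]
  have expand : ∀ M : Matrix (Fin n) (Fin n) ℂ,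
      (M - lam • (1 : Matrix (Fin n) (Fin n) ℂ)).mulVec v = M.mulVec v - lam • v := by
    intro M
    rw [Matrix.sub_mulVec, Matrix.smul_mulVec, Matrix.one_mulVec]
  have h1 := hfin
  rw [hNa, hNb, expand, expand] at h1
  exact sub_left_inj.mp h1

open Module.End in
theorem complex_exp_injective (A B : Matrix (Fin n) (Fin n) ℂ)
    (hA : ∀ μ ∈ spectrum ℂ A, |μ.im| < Real.pi)
    (hB : ∀ μ ∈ spectrum ℂ B, |μ.im| < Real.pi)
    (hE : exp A = exp B) : A = B := by
  rcases Nat.eq_zero_or_pos n with hn | hn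
  · ext i j
    exact absurd i.2 (by omega)
  have hGE : ∀ lam : ℂ, maxGenEigenspace (Matrix.toLinAlgEquiv' A) lam
      = maxGenEigenspace (Matrix.toLinAlgEquiv' B) lam := fun lam =>
    le_antisymm (maxGE_le_of_exp_eq A B hA hB hE lam)
      (maxGE_le_of_exp_eq B A hB hA hE.symm lam)
  have hker : ∀ lam : ℂ, maxGenEigenspace (Matrix.toLinAlgEquiv' A) lam ≤
      LinearMap.ker (Matrix.toLinAlgEquiv' A - Matrix.toLinAlgEquiv' B) := by
    intro lam v hv
    rw [LinearMap.mem_ker, LinearMap.sub_apply, sub_eq_zero,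
      Matrix.toLinAlgEquiv'_apply, Matrix.toLinAlgEquiv'_apply]
    exact mulVec_eq_on_maxGE A B hn lam hE (hGE lam) v hv
  have htop : (⊤ : Submodule ℂ (Fin n → ℂ)) ≤
      LinearMap.ker (Matrix.toLinAlgEquiv' A - Matrix.toLinAlgEquiv' B) := by
    rw [← Module.End.iSup_maxGenEigenspace_eq_top (Matrix.toLinAlgEquiv' A)]
    exact iSup_le hker
  have heq : Matrix.toLinAlgEquiv' A = Matrix.toLinAlgEquiv' B := by
    refine LinearMap.ext fun v => ?_
    have := htop (Submodule.mem_top (x := v))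
    rw [LinearMap.mem_ker, LinearMap.sub_apply, sub_eq_zero] at this
    exact this
  exact Matrix.toLinAlgEquiv'.injective heq

end MatrixPart

open Matrix

/-- Uniqueness of the principal matrix logarithm: if `e^{hA} = e^{hB}` for some `h > 0`
and all eigenvalues `λ` of `A` and of `B` satisfy `|Im λ| < π / h`, then `A = B`. -/
theorem eq_of_exp_eq_of_spectrum_in_strip
    (N : ℕ) (A B : Matrix (Fin N) (Fin N) ℝ) (h : ℝ) (hh : 0 < h)
    (hA : ∀ μ ∈ spectrum ℂ (A.map (algebraMap ℝ ℂ)), |μ.im| < Real.pi / h)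
    (hB : ∀ μ ∈ spectrum ℂ (B.map (algebraMap ℝ ℂ)), |μ.im| < Real.pi / h)
    (hexp : NormedSpace.exp (h • A) = NormedSpace.exp (h • B)) :
    A = B := by
  letI : NormedAddCommGroup (Matrix (Fin N) (Fin N) ℝ) := Matrix.linftyOpNormedAddCommGroup
  letI : NormedRing (Matrix (Fin N) (Fin N) ℝ) := Matrix.linftyOpNormedRing
  letI : NormedAlgebra ℝ (Matrix (Fin N) (Fin N) ℝ) := Matrix.linftyOpNormedAlgebra
  letI : NormedAddCommGroup (Matrix (Fin N) (Fin N) ℂ) := Matrix.linftyOpNormedAddCommGroup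
  letI : NormedRing (Matrix (Fin N) (Fin N) ℂ) := Matrix.linftyOpNormedRing
  letI : NormedAlgebra ℝ (Matrix (Fin N) (Fin N) ℂ) := Matrix.linftyOpNormedAlgebra
  letI : NormedAlgebra ℂ (Matrix (Fin N) (Fin N) ℂ) := Matrix.linftyOpNormedAlgebra
  open NormedSpace Pointwise in
  have main : A = B := by
    have hC : ((h : ℂ)) ≠ 0 := by exact_mod_cast hh.ne'
    set ψ : Matrix (Fin N) (Fin N) ℝ →ₐ[ℝ] Matrix (Fin N) (Fin N) ℂ :=
      (Algebra.ofId ℝ ℂ).mapMatrix with hψdef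
    have hψapp : ∀ M : Matrix (Fin N) (Fin N) ℝ, ψ M = M.map (algebraMap ℝ ℂ) := by
      intro M
      ext i j
      simp [hψdef, AlgHom.mapMatrix_apply, Matrix.map_apply, Algebra.ofId_apply]
    have hcont : Continuous ψ := ψ.toLinearMap.continuous_of_finiteDimensional
    have hexp2 : exp (ψ (h • A)) = exp (ψ (h • B)) := by
      erw [← map_exp_of_mem_ball (𝕂 := ℝ) (𝔸 := Matrix (Fin N) (Fin N) ℝ) ψ hcont _ ((expSeries_radius_eq_top ℝ (Matrix (Fin N) (Fin N) ℝ)).symm ▸ edist_lt_top _ _), ← map_exp_of_mem_ball (𝕂 := ℝ) (𝔸 := Matrix (Fin N) (Fin N) ℝ) ψ hcont _ ((expSeries_radius_eq_top ℝ (Matrix (Fin N) (Fin N) ℝ)).symm ▸ edist_lt_top _ _), hexp]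
      rfl
    have hfield : (exp : Matrix (Fin N) (Fin N) ℂ → Matrix (Fin N) (Fin N) ℂ) = exp :=
      rfl
    have hsm : ∀ M : Matrix (Fin N) (Fin N) ℝ, ψ (h • M) = (h : ℂ) • ψ M := by
      intro M
      rw [_root_.map_smul]
      ext i j
      simp [Matrix.smul_apply, Complex.real_smul]
    have hspec : ∀ (M : Matrix (Fin N) (Fin N) ℝ),
        (∀ μ ∈ spectrum ℂ (M.map (algebraMap ℝ ℂ)), |μ.im| < Real.pi / h) →
        ∀ μ ∈ spectrum ℂ (ψ (h • M)), |μ.im| < Real.pi := by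
      intro M hM μ hmu
      rw [hsm] at hmu
      have hu : μ ∈ (Units.mk0 (h:ℂ) hC) • spectrum ℂ (ψ M) := by
        rw [← spectrum.unit_smul_eq_smul]
        rwa [Units.smul_def]
      obtain ⟨ν, hν, hνμ⟩ := hu
      have h1 : |ν.im| < Real.pi / h := hM ν (by rwa [← hψapp])
      have hμν : μ = (h : ℂ) * ν := by
        rw [← hνμ]
        simp [Units.smul_def, smul_eq_mul]
      have him : μ.im = h * ν.im := by
        rw [hμν]
        simp [Complex.mul_im]
      rw [him, abs_mul, abs_of_pos hh]
      calc h * |ν.im| < h * (Real.pi / h) := by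
            exact mul_lt_mul_of_pos_left h1 hh
        _ = Real.pi := by field_simp
    have hAB : ψ (h • A) = ψ (h • B) := by
      apply complex_exp_injective _ _ (hspec A hA) (hspec B hB)
      rw [← hfield]
      exact hexp2
    have h3 : ψ A = ψ B := by
      rw [hsm, hsm] at hAB
      exact smul_right_injective _ hC hAB
    ext i j
    have h4 := congrArg (fun X => X i j) (by rw [hψapp, hψapp] at h3; exact h3 :
      A.map (algebraMap ℝ ℂ) = B.map (algebraMap ℝ ℂ))
    simp only [Matrix.map_apply] at h4
    exact_mod_cast h4

  exact main
end

section
/- Let A ∈ M_N(ℝ), B ∈ M_{N,m}(ℝ), let Σ ∈ M_m(ℝ) be symmetric positive definite, and let t > 0. Then the image (column space) of the N×(mN) block matrix [B, AB, ..., A^{N−1}B] equals the image of the N×N matrix ∫₀^t e^{Au} B Σ Bᵀ e^{Aᵀu} du. -/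
open Matrix MeasureTheory NormedSpace Set

section Aux

lemma ctrb_inner_eq_dot {n : ℕ} (a b : EuclideanSpace ℝ (Fin n)) :
    (inner ℝ a b : ℝ) = dotProduct (a : Fin n → ℝ) b := by
  simp [PiLp.inner_apply, RCLike.inner_apply, dotProduct, mul_comm]

lemma ctrb_ker_transpose_eq_orth {n : ℕ} {k : Type*} [Fintype k] (M : Matrix (Fin n) k ℝ) :
    (LinearMap.ker Mᵀ.mulVecLin).map ((WithLp.linearEquiv 2 ℝ (Fin n → ℝ)).symm : (Fin n → ℝ) →ₗ[ℝ] EuclideanSpace ℝ (Fin n)) =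
      ((LinearMap.range M.mulVecLin).map ((WithLp.linearEquiv 2 ℝ (Fin n → ℝ)).symm : (Fin n → ℝ) →ₗ[ℝ] EuclideanSpace ℝ (Fin n)))ᗮ := by
  ext x
  rw [Submodule.mem_map_equiv, LinearMap.mem_ker, Submodule.mem_orthogonal]
  constructor
  · intro h u hu
    obtain ⟨_, ⟨v, rfl⟩, rfl⟩ := hu
    rw [ctrb_inner_eq_dot]
    show dotProduct (M *ᵥ v) x.ofLp = 0
    rw [dotProduct_comm, dotProduct_mulVec, ← Matrix.mulVec_transpose]
    rw [show Mᵀ *ᵥ x.ofLp = 0 from h, zero_dotProduct]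
  · intro h
    have h2 := h (WithLp.toLp 2 (M.mulVecLin (Mᵀ *ᵥ x.ofLp))) (Submodule.mem_map_of_mem ⟨_, rfl⟩)
    rw [ctrb_inner_eq_dot] at h2
    have h3 : dotProduct (M *ᵥ (Mᵀ *ᵥ x.ofLp)) x.ofLp = 0 := h2
    show Mᵀ *ᵥ x.ofLp = 0
    rw [dotProduct_comm, dotProduct_mulVec, ← Matrix.mulVec_transpose] at h3
    exact dotProduct_self_eq_zero.mp h3

lemma ctrb_range_eq_orth_ker {n : ℕ} {k : Type*} [Fintype k] (M : Matrix (Fin n) k ℝ) :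
    (LinearMap.range M.mulVecLin).map ((WithLp.linearEquiv 2 ℝ (Fin n → ℝ)).symm : (Fin n → ℝ) →ₗ[ℝ] EuclideanSpace ℝ (Fin n)) =
      ((LinearMap.ker Mᵀ.mulVecLin).map ((WithLp.linearEquiv 2 ℝ (Fin n → ℝ)).symm : (Fin n → ℝ) →ₗ[ℝ] EuclideanSpace ℝ (Fin n)))ᗮ := by
  rw [ctrb_ker_transpose_eq_orth, Submodule.orthogonal_orthogonal]

lemma ctrb_entry_cont {a b : ℕ} {F : ℝ → Matrix (Fin a) (Fin b) ℝ} (hF : Continuous F)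
    (i : Fin a) (j : Fin b) : Continuous fun u => F u i j :=
  (continuous_apply j).comp ((continuous_apply i).comp hF)

lemma ctrb_mulVec_entry_cont {a b : ℕ} {F : ℝ → Matrix (Fin a) (Fin b) ℝ} (hF : Continuous F)
    (x : Fin b → ℝ) (i : Fin a) : Continuous fun u => (F u *ᵥ x) i := by
  show Continuous fun u => ∑ j, F u i j * x j
  exact continuous_finset_sum _ fun j _ => (ctrb_entry_cont hF i j).mul continuous_const

lemma ctrb_mulVec_integral {a b : ℕ} (F : ℝ → Matrix (Fin a) (Fin b) ℝ) (hF : Continuous F)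
    (t : ℝ) (x : Fin b → ℝ) :
    (Matrix.of fun i j => ∫ u in (0:ℝ)..t, F u i j) *ᵥ x
      = fun i => ∫ u in (0:ℝ)..t, (F u *ᵥ x) i := by
  funext i
  show ∑ j, (∫ u in (0:ℝ)..t, F u i j) * x j = ∫ u in (0:ℝ)..t, ∑ j, F u i j * x j
  calc ∑ j, (∫ u in (0:ℝ)..t, F u i j) * x j
      = ∑ j, ∫ u in (0:ℝ)..t, F u i j * x j :=
        Finset.sum_congr rfl fun j _ => (intervalIntegral.integral_mul_const _ _).symm
    _ = ∫ u in (0:ℝ)..t, ∑ j, F u i j * x j :=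
        (intervalIntegral.integral_finset_sum fun j _ =>
          ((ctrb_entry_cont hF i j).mul continuous_const).intervalIntegrable _ _).symm

lemma ctrb_dot_mulVec_integral {a : ℕ} (F : ℝ → Matrix (Fin a) (Fin a) ℝ) (hF : Continuous F)
    (t : ℝ) (x : Fin a → ℝ) :
    x ⬝ᵥ ((Matrix.of fun i j => ∫ u in (0:ℝ)..t, F u i j) *ᵥ x)
      = ∫ u in (0:ℝ)..t, x ⬝ᵥ (F u *ᵥ x) := by
  rw [ctrb_mulVec_integral F hF t x]
  show ∑ i, x i * ∫ u in (0:ℝ)..t, (F u *ᵥ x) i = ∫ u in (0:ℝ)..t, ∑ i, x i * (F u *ᵥ x) i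
  calc ∑ i, x i * ∫ u in (0:ℝ)..t, (F u *ᵥ x) i
      = ∑ i, ∫ u in (0:ℝ)..t, x i * (F u *ᵥ x) i :=
        Finset.sum_congr rfl fun i _ => (intervalIntegral.integral_const_mul _ _).symm
    _ = ∫ u in (0:ℝ)..t, ∑ i, x i * (F u *ᵥ x) i :=
        (intervalIntegral.integral_finset_sum fun i _ =>
          (continuous_const.mul (ctrb_mulVec_entry_cont hF x i)).intervalIntegrable _ _).symm

lemma ctrb_exp_cont {N : ℕ} (A : Matrix (Fin N) (Fin N) ℝ) :
    Continuous fun u : ℝ => exp (u • A) := by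
  letI : SeminormedRing (Matrix (Fin N) (Fin N) ℝ) := Matrix.linftyOpSemiNormedRing
  letI : NormedRing (Matrix (Fin N) (Fin N) ℝ) := Matrix.linftyOpNormedRing
  letI : NormedAlgebra ℝ (Matrix (Fin N) (Fin N) ℝ) := Matrix.linftyOpNormedAlgebra
  exact continuous_iff_continuousAt.2 fun u => (hasDerivAt_exp_smul_const A u).continuousAt

lemma ctrb_exp_deriv {N : ℕ} (A : Matrix (Fin N) (Fin N) ℝ)
    (L : Matrix (Fin N) (Fin N) ℝ →ₗ[ℝ] ℝ) (u : ℝ) :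
    HasDerivAt (fun v : ℝ => L (exp (v • A))) (L (exp (u • A) * A)) u := by
  letI : SeminormedRing (Matrix (Fin N) (Fin N) ℝ) := Matrix.linftyOpSemiNormedRing
  letI : NormedRing (Matrix (Fin N) (Fin N) ℝ) := Matrix.linftyOpNormedRing
  letI : NormedAlgebra ℝ (Matrix (Fin N) (Fin N) ℝ) := Matrix.linftyOpNormedAlgebra
  have h1 : HasDerivAt (fun v : ℝ => exp (v • A)) (exp (u • A) * A) u :=
    hasDerivAt_exp_smul_const A u
  exact (L.toContinuousLinearMap.hasFDerivAt.comp_hasDerivAt u h1 :)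

lemma ctrb_exp_comm {N : ℕ} (A : Matrix (Fin N) (Fin N) ℝ) (u : ℝ) :
    exp (u • A) * A = A * exp (u • A) := by
  letI : SeminormedRing (Matrix (Fin N) (Fin N) ℝ) := Matrix.linftyOpSemiNormedRing
  letI : NormedRing (Matrix (Fin N) (Fin N) ℝ) := Matrix.linftyOpNormedRing
  letI : NormedAlgebra ℝ (Matrix (Fin N) (Fin N) ℝ) := Matrix.linftyOpNormedAlgebra
  exact (((Commute.refl A).smul_left u).exp_left)

lemma ctrb_exp_tsum_apply {N m : ℕ} (A : Matrix (Fin N) (Fin N) ℝ)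
    (L : Matrix (Fin N) (Fin N) ℝ →ₗ[ℝ] (Fin m → ℝ)) (u : ℝ) :
    L (exp (u • A)) = ∑' n : ℕ, ((n.factorial : ℝ)⁻¹ * u ^ n) • L (A ^ n) := by
  letI : SeminormedRing (Matrix (Fin N) (Fin N) ℝ) := Matrix.linftyOpSemiNormedRing
  letI : NormedRing (Matrix (Fin N) (Fin N) ℝ) := Matrix.linftyOpNormedRing
  letI : NormedAlgebra ℝ (Matrix (Fin N) (Fin N) ℝ) := Matrix.linftyOpNormedAlgebra
  have h0 : exp (u • A) = ∑' n : ℕ, ((n.factorial : ℝ)⁻¹ : ℝ) • (u • A) ^ n := by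
    rw [exp_eq_tsum ℝ]
  have h1 := ContinuousLinearMap.map_tsum L.toContinuousLinearMap
    (expSeries_summable' (𝕂 := ℝ) (u • A))
  simp only [LinearMap.coe_toContinuousLinearMap'] at h1
  rw [h0, h1]
  congr 1
  funext n
  rw [smul_pow, _root_.map_smul, _root_.map_smul, smul_smul]

lemma ctrb_sum_mulVec {a b : ℕ} {ι : Type*} (s : Finset ι) (f : ι → Matrix (Fin a) (Fin b) ℝ)
    (x : Fin b → ℝ) : (∑ i ∈ s, f i) *ᵥ x = ∑ i ∈ s, f i *ᵥ x := by
  funext j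
  simp only [mulVec, dotProduct, Matrix.sum_apply, Finset.sum_mul, Finset.sum_apply]
  rw [Finset.sum_comm]

/-- The scalar linear functional `M ↦ y ⬝ᵥ ((D * M) *ᵥ x)`. -/
def ctrbDotL {N m : ℕ} (D : Matrix (Fin m) (Fin N) ℝ) (y : Fin m → ℝ) (x : Fin N → ℝ) :
    Matrix (Fin N) (Fin N) ℝ →ₗ[ℝ] ℝ where
  toFun M := y ⬝ᵥ ((D * M) *ᵥ x)
  map_add' M₁ M₂ := by simp [Matrix.mul_add, Matrix.add_mulVec]
  map_smul' c M := by
    simp [Matrix.mul_smul, Matrix.smul_mulVec, smul_eq_mul, dotProduct_smul]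

/-- The linear map `M ↦ Bᵀ *ᵥ (M *ᵥ x)`. -/
def ctrbMvL {N m : ℕ} (B : Matrix (Fin N) (Fin m) ℝ) (x : Fin N → ℝ) :
    Matrix (Fin N) (Fin N) ℝ →ₗ[ℝ] (Fin m → ℝ) where
  toFun M := Bᵀ *ᵥ (M *ᵥ x)
  map_add' M₁ M₂ := by simp [Matrix.add_mulVec, Matrix.mulVec_add]
  map_smul' c M := by simp [Matrix.smul_mulVec, Matrix.mulVec_smul]

end Aux

/-- The image of the controllability matrix `[B, AB, …, A^{N-1}B]` equals the image of the
finite-horizon controllability Gramian `∫₀^t e^{Au} B Σ Bᵀ e^{Aᵀu} du`, for any symmetric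
positive definite `Σ` and any `t > 0`. -/
theorem image_controllability_eq_image_gramian
    (N m : ℕ) (A : Matrix (Fin N) (Fin N) ℝ) (B : Matrix (Fin N) (Fin m) ℝ)
    (Sig : Matrix (Fin m) (Fin m) ℝ) (hSig : Sig.PosDef)
    (t : ℝ) (ht : 0 < t) :
    LinearMap.range (Matrix.mulVecLin
        (Matrix.of fun (i : Fin N) (p : Fin N × Fin m) => (A ^ (p.1 : ℕ) * B) i p.2)) =
    LinearMap.range (Matrix.mulVecLin
        (Matrix.of fun i j =>
          ∫ u in (0:ℝ)..t,
            (NormedSpace.exp (u • A) * B * Sig * Bᵀ * NormedSpace.exp (u • Aᵀ)) i j)) := by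
  classical
  set C : Matrix (Fin N) (Fin N × Fin m) ℝ :=
    Matrix.of fun (i : Fin N) (p : Fin N × Fin m) => (A ^ (p.1 : ℕ) * B) i p.2 with hC
  set F : ℝ → Matrix (Fin N) (Fin N) ℝ :=
    fun u => exp (u • A) * B * Sig * Bᵀ * exp (u • Aᵀ) with hF
  set G : Matrix (Fin N) (Fin N) ℝ :=
    Matrix.of fun i j => ∫ u in (0:ℝ)..t, F u i j with hG
  -- basic transpose facts about exp
  have hET : ∀ u : ℝ, (exp (u • A))ᵀ = exp (u • Aᵀ) := by
    intro u
    rw [← Matrix.transpose_smul, Matrix.exp_transpose]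
  have hET' : ∀ u : ℝ, (exp (u • Aᵀ))ᵀ = exp (u • A) := by
    intro u
    rw [← Matrix.transpose_smul, Matrix.exp_transpose, Matrix.transpose_transpose]
  -- Sig is symmetric
  have hSigT : Sigᵀ = Sig := by
    have := hSig.1
    rwa [Matrix.IsHermitian, Matrix.conjTranspose_eq_transpose_of_trivial] at this
  -- F is continuous and symmetric
  have hFcont : Continuous F := by
    refine ((((ctrb_exp_cont A).matrix_mul continuous_const).matrix_mul
      continuous_const).matrix_mul continuous_const).matrix_mul (ctrb_exp_cont Aᵀ)
  have hFt : ∀ u, (F u)ᵀ = F u := by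
    intro u
    show (exp (u • A) * B * Sig * Bᵀ * exp (u • Aᵀ))ᵀ
        = exp (u • A) * B * Sig * Bᵀ * exp (u • Aᵀ)
    simp only [Matrix.transpose_mul, Matrix.transpose_transpose, hET, hET', hSigT,
      Matrix.mul_assoc]
  have hGsymm : Gᵀ = G := by
    ext i j
    show (∫ u in (0:ℝ)..t, F u j i) = ∫ u in (0:ℝ)..t, F u i j
    refine intervalIntegral.integral_congr fun u _ => ?_
    conv_rhs => rw [← hFt u]
    rw [Matrix.transpose_apply]
  -- characterization of `Cᵀ *ᵥ x = 0`
  have hCx : ∀ x : Fin N → ℝ,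
      Cᵀ *ᵥ x = 0 ↔ ∀ k : Fin N, (Bᵀ * Aᵀ ^ (k : ℕ)) *ᵥ x = 0 := by
    intro x
    have hentry : ∀ (k : Fin N) (j : Fin m),
        (Cᵀ *ᵥ x) (k, j) = ((Bᵀ * Aᵀ ^ (k : ℕ)) *ᵥ x) j := by
      intro k j
      have hBA : Bᵀ * Aᵀ ^ (k : ℕ) = (A ^ (k : ℕ) * B)ᵀ := by
        rw [Matrix.transpose_mul, Matrix.transpose_pow]
      rw [hBA]
      show ∑ i, Cᵀ (k, j) i * x i = ∑ i, (A ^ (k : ℕ) * B)ᵀ j i * x i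
      rfl
    constructor
    · intro h k
      funext j
      rw [← hentry k j, h]
      rfl
    · intro h
      funext p
      obtain ⟨k, j⟩ := p
      rw [hentry k j, h k]
      rfl
  -- the two kernels coincide
  have key : LinearMap.ker Cᵀ.mulVecLin =
      LinearMap.ker Gᵀ.mulVecLin := by
    rw [hGsymm]
    ext x
    rw [LinearMap.mem_ker, LinearMap.mem_ker]
    show Cᵀ *ᵥ x = 0 ↔ G *ᵥ x = 0
    constructor
    · -- ker Cᵀ ⊆ ker G
      intro h
      have hfin : ∀ k : Fin N, (Bᵀ * Aᵀ ^ (k : ℕ)) *ᵥ x = 0 := (hCx x).mp h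
      -- Cayley–Hamilton extension to all powers
      have hall : ∀ k : ℕ, (Bᵀ * Aᵀ ^ k) *ᵥ x = 0 := by
        set M : Matrix (Fin N) (Fin N) ℝ := Aᵀ with hM
        set p : Polynomial ℝ := M.charpoly with hp
        have hNdeg : p.natDegree = N := by
          rw [hp, Matrix.charpoly_natDegree_eq_dim, Fintype.card_fin]
        have hcN : p.coeff N = 1 := by
          rw [← hNdeg]
          exact (Matrix.charpoly_monic M).coeff_natDegree
        have hMN : M ^ N = ∑ i ∈ Finset.range N, (-(p.coeff i)) • M ^ i := by
          have h0 := Matrix.aeval_self_charpoly M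
          rw [Polynomial.aeval_eq_sum_range, hNdeg, Finset.sum_range_succ, hcN, one_smul] at h0
          have h1 : M ^ N = -∑ i ∈ Finset.range N, p.coeff i • M ^ i :=
            eq_neg_of_add_eq_zero_right h0
          rw [h1, ← Finset.sum_neg_distrib]
          exact Finset.sum_congr rfl fun i _ => (neg_smul _ _).symm
        intro k
        induction k using Nat.strong_induction_on with
        | _ k ih =>
          by_cases hkN : k < N
          · exact hfin ⟨k, hkN⟩
          · push_neg at hkN
            have hMk : M ^ k = ∑ i ∈ Finset.range N, (-(p.coeff i)) • M ^ (k - N + i) := by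
              have hpow : M ^ k = M ^ (k - N) * M ^ N := by
                rw [← pow_add]
                congr 1
                omega
              rw [hpow, hMN, Matrix.mul_sum]
              exact Finset.sum_congr rfl fun i _ => by
                rw [Matrix.mul_smul, ← pow_add]
            have hBMk : Bᵀ * M ^ k
                = ∑ i ∈ Finset.range N, (-(p.coeff i)) • (Bᵀ * M ^ (k - N + i)) := by
              rw [hMk, Matrix.mul_sum]
              exact Finset.sum_congr rfl fun i _ => Matrix.mul_smul _ _ _
            rw [hBMk, ctrb_sum_mulVec]
            refine Finset.sum_eq_zero fun i hi => ?_
            rw [Matrix.smul_mulVec, ih (k - N + i) (by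
              have := Finset.mem_range.mp hi
              omega), smul_zero]
      -- hence Bᵀ e^{uAᵀ} x = 0 for every u
      have hw : ∀ u : ℝ, Bᵀ *ᵥ (exp (u • Aᵀ) *ᵥ x) = 0 := by
        intro u
        have h0 : Bᵀ *ᵥ (exp (u • Aᵀ) *ᵥ x) = ctrbMvL B x (exp (u • Aᵀ)) := rfl
        rw [h0, ctrb_exp_tsum_apply]
        have : ∀ n : ℕ, ((n.factorial : ℝ)⁻¹ * u ^ n) • ctrbMvL B x (Aᵀ ^ n) = 0 := by
          intro n
          have h1 : ctrbMvL B x (Aᵀ ^ n) = (Bᵀ * Aᵀ ^ n) *ᵥ x := by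
            show Bᵀ *ᵥ (Aᵀ ^ n *ᵥ x) = _
            rw [Matrix.mulVec_mulVec]
          rw [h1, hall n, smul_zero]
        rw [tsum_congr this, tsum_zero]
      -- so G x = 0
      have hFx : ∀ u : ℝ, F u *ᵥ x = 0 := by
        intro u
        have h1 : F u = exp (u • A) * B * Sig * (Bᵀ * exp (u • Aᵀ)) := by
          rw [hF]
          simp only [Matrix.mul_assoc]
        have h2 : (Bᵀ * exp (u • Aᵀ)) *ᵥ x = 0 := by
          rw [← Matrix.mulVec_mulVec, hw u]
        rw [h1, ← Matrix.mulVec_mulVec, h2, Matrix.mulVec_zero]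
      rw [hG]
      rw [ctrb_mulVec_integral F hFcont t x]
      funext i
      show (∫ u in (0:ℝ)..t, (F u *ᵥ x) i) = 0
      have : ∀ u : ℝ, (F u *ᵥ x) i = 0 := fun u => by rw [hFx u]; rfl
      simp only [this, intervalIntegral.integral_zero]
    · -- ker G ⊆ ker Cᵀ
      intro h
      -- the quadratic form vanishes
      set w : ℝ → (Fin m → ℝ) := fun u => Bᵀ *ᵥ (exp (u • Aᵀ) *ᵥ x) with hwdef
      set g : ℝ → ℝ := fun u => w u ⬝ᵥ (Sig *ᵥ w u) with hgdef
      have hwc : Continuous fun u : ℝ => (Bᵀ * exp (u • Aᵀ)) := by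
        exact continuous_const.matrix_mul (ctrb_exp_cont Aᵀ)
      have hwcont : ∀ j, Continuous fun u => w u j := by
        intro j
        have : (fun u => w u j) = fun u => ((Bᵀ * exp (u • Aᵀ)) *ᵥ x) j := by
          funext u
          rw [hwdef]
          show (Bᵀ *ᵥ (exp (u • Aᵀ) *ᵥ x)) j = _
          rw [Matrix.mulVec_mulVec]
        rw [this]
        exact ctrb_mulVec_entry_cont hwc x j
      have hgcont : Continuous g := by
        rw [hgdef]
        show Continuous fun u => ∑ j, w u j * (Sig *ᵥ w u) j
        refine continuous_finset_sum _ fun j _ => (hwcont j).mul ?_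
        show Continuous fun u => ∑ l, Sig j l * w u l
        exact continuous_finset_sum _ fun l _ => continuous_const.mul (hwcont l)
      have hquad : ∀ u : ℝ, x ⬝ᵥ (F u *ᵥ x) = g u := by
        intro u
        have hP : F u = (exp (u • A) * B) * Sig * (exp (u • A) * B)ᵀ := by
          rw [hF, Matrix.transpose_mul, hET]
          simp only [Matrix.mul_assoc]
        have hPT : (exp (u • A) * B)ᵀ *ᵥ x = w u := by
          rw [Matrix.transpose_mul, hET, hwdef, ← Matrix.mulVec_mulVec]
        rw [hP, ← Matrix.mulVec_mulVec, ← Matrix.mulVec_mulVec,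
          Matrix.dotProduct_mulVec x, ← Matrix.mulVec_transpose, hPT, hgdef]
      have hint0 : (∫ u in (0:ℝ)..t, g u) = 0 := by
        have h1 := ctrb_dot_mulVec_integral F hFcont t x
        rw [show (Matrix.of fun i j => ∫ u in (0:ℝ)..t, F u i j) = G from rfl] at h1
        rw [← intervalIntegral.integral_congr (fun u _ => (hquad u)), ← h1, h,
          dotProduct_zero]
      have hgnn : ∀ u : ℝ, 0 ≤ g u := by
        intro u
        have := hSig.posSemidef.dotProduct_mulVec_nonneg (w u)
        simpa [hgdef] using this
      have hae : g =ᵐ[volume.restrict (Ioc (0:ℝ) t)] 0 :=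
        (intervalIntegral.integral_eq_zero_iff_of_le_of_nonneg_ae ht.le
          (ae_of_all _ hgnn) (hgcont.intervalIntegrable _ _)).mp hint0
      have hIoc : EqOn g 0 (Ioc 0 t) :=
        Measure.eqOn_Ioc_of_ae_eq volume hae hgcont.continuousOn continuousOn_const
      have hIcc : EqOn g 0 (Icc 0 t) := by
        have h1 := hIoc.closure hgcont continuous_const
        rwa [closure_Ioc ht.ne] at h1
      have hw0 : ∀ u ∈ Icc (0:ℝ) t, w u = 0 := by
        intro u hu
        by_contra hne
        have h1 := hSig.dotProduct_mulVec_pos hne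
        have h2 : g u = 0 := hIcc hu
        rw [hgdef] at h2
        simp only [star_trivial] at h1
        rw [show (fun u => w u ⬝ᵥ (Sig *ᵥ w u)) u = w u ⬝ᵥ (Sig *ᵥ w u) from rfl] at h2
        rw [h2] at h1
        exact lt_irrefl 0 h1
      -- induction on derivatives
      have hstep : ∀ D : Matrix (Fin m) (Fin N) ℝ,
          (∀ y, EqOn (fun u => y ⬝ᵥ ((D * exp (u • Aᵀ)) *ᵥ x)) 0 (Icc 0 t)) →
          ∀ y, EqOn (fun u => y ⬝ᵥ ((D * Aᵀ * exp (u • Aᵀ)) *ᵥ x)) 0 (Icc 0 t) := by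
        intro D hD y
        have hcont2 : Continuous fun u : ℝ => y ⬝ᵥ ((D * Aᵀ * exp (u • Aᵀ)) *ᵥ x) := by
          have hmm : Continuous fun u : ℝ => (D * Aᵀ * exp (u • Aᵀ)) *ᵥ x := by
            refine continuous_pi fun i =>
              ctrb_mulVec_entry_cont (continuous_const.matrix_mul (ctrb_exp_cont Aᵀ)) x i
          show Continuous fun u : ℝ => ∑ j, y j * ((D * Aᵀ * exp (u • Aᵀ)) *ᵥ x) j
          exact continuous_finset_sum _ fun j _ =>
            continuous_const.mul ((continuous_apply j).comp hmm)
        have hIoo : EqOn (fun u => y ⬝ᵥ ((D * Aᵀ * exp (u • Aᵀ)) *ᵥ x)) 0 (Ioo 0 t) := by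
          intro u hu
          have hd := ctrb_exp_deriv Aᵀ (ctrbDotL D y x) u
          have hev : (fun v : ℝ => ctrbDotL D y x (exp (v • Aᵀ))) =ᶠ[nhds u]
              (fun _ => (0:ℝ)) := by
            filter_upwards [Icc_mem_nhds hu.1 hu.2] with v hv
            exact hD y hv
          have hzero : HasDerivAt (fun _ : ℝ => (0:ℝ))
              (ctrbDotL D y x (exp (u • Aᵀ) * Aᵀ)) u := hd.congr_of_eventuallyEq hev.symm
          have huniq := hzero.unique (hasDerivAt_const u 0)
          have harr : D * Aᵀ * exp (u • Aᵀ) = D * (exp (u • Aᵀ) * Aᵀ) := by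
            rw [Matrix.mul_assoc, ← ctrb_exp_comm Aᵀ u]
          show y ⬝ᵥ ((D * Aᵀ * exp (u • Aᵀ)) *ᵥ x) = 0
          rw [harr]
          exact huniq
        have h1 := hIoo.closure hcont2 continuous_const
        rwa [closure_Ioo ht.ne] at h1
      have hind : ∀ (k : ℕ) (y : Fin m → ℝ),
          EqOn (fun u => y ⬝ᵥ ((Bᵀ * Aᵀ ^ k * exp (u • Aᵀ)) *ᵥ x)) 0 (Icc 0 t) := by
        intro k
        induction k with
        | zero =>
          intro y u hu
          show y ⬝ᵥ ((Bᵀ * Aᵀ ^ 0 * exp (u • Aᵀ)) *ᵥ x) = 0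
          rw [pow_zero, Matrix.mul_one, ← Matrix.mulVec_mulVec]
          rw [show Bᵀ *ᵥ (exp (u • Aᵀ) *ᵥ x) = w u from rfl, hw0 u hu, dotProduct_zero]
        | succ k ih =>
          intro y
          have h2 := hstep (Bᵀ * Aᵀ ^ k) ih y
          have h3 : Bᵀ * Aᵀ ^ (k + 1) = Bᵀ * Aᵀ ^ k * Aᵀ := by
            rw [pow_succ, Matrix.mul_assoc]
          rw [h3]
          exact h2
      -- evaluate at u = 0
      have hk0 : ∀ k : ℕ, (Bᵀ * Aᵀ ^ k) *ᵥ x = 0 := by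
        intro k
        funext j
        have h1 := hind k (Pi.single j 1) (left_mem_Icc.mpr ht.le)
        simp only [zero_smul, exp_zero, Matrix.mul_one, single_dotProduct,
          one_mul, Pi.zero_apply] at h1
        exact h1
      exact (hCx x).mpr fun k => hk0 (k : ℕ)
  -- assemble
  have main : (LinearMap.range C.mulVecLin).map ((WithLp.linearEquiv 2 ℝ (Fin N → ℝ)).symm : (Fin N → ℝ) →ₗ[ℝ] EuclideanSpace ℝ (Fin N)) =
      (LinearMap.range G.mulVecLin).map ((WithLp.linearEquiv 2 ℝ (Fin N → ℝ)).symm : (Fin N → ℝ) →ₗ[ℝ] EuclideanSpace ℝ (Fin N)) := by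
    rw [ctrb_range_eq_orth_ker C, ctrb_range_eq_orth_ker G, key]
  exact Submodule.map_injective_of_injective (WithLp.linearEquiv 2 ℝ (Fin N → ℝ)).symm.injective main
end

section
/- Let A be an N×N real matrix whose eigenvalues all have strictly negative real parts, and assume the Lyapunov equation AΓ₀ + Γ₀Aᵀ = −BΣBᵀ holds with Γ₀ = ∫₀^∞ e^{Au}BΣBᵀe^{Aᵀu}du. Then for every real ω, the identity (1/2π) C(iωI − A)^{−1} B Σ Bᵀ (−iωI − Aᵀ)^{−1} Cᵀ = (1/2π) ∫_{−∞}^{∞} e^{−iωh} γ(h) dh holds, where γ(h) = C e^{Ah} Γ₀ Cᵀ for h ≥ 0 and γ(h) = C Γ₀ e^{−Aᵀh} Cᵀ for h < 0. -/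
open Topology Matrix MeasureTheory NormedSpace Filter Set

attribute [local instance] Matrix.linftyOpNormedAddCommGroup Matrix.linftyOpNormedRing
  Matrix.linftyOpNormedAlgebra

noncomputable instance instCENormMatrixC {n : Type*} [Fintype n] : ContinuousENorm (Matrix n n ℂ) :=
  @SeminormedAddGroup.toContinuousENorm _
    (Matrix.linftyOpSeminormedAddCommGroup (m := n) (n := n) (α := ℂ)).toSeminormedAddGroup

instance instPMetrizMatrixC {n : Type*} [Fintype n] :
    TopologicalSpace.PseudoMetrizableSpace (Matrix n n ℂ) :=
  inferInstanceAs (TopologicalSpace.PseudoMetrizableSpace (n → n → ℂ))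

namespace SpecDen


lemma tendsto_pow_mul_exp_neg_mul (j : ℕ) {ε : ℝ} (hε : 0 < ε) :
    Tendsto (fun t : ℝ => t ^ j * Real.exp (-(ε * t))) atTop (𝓝 0) := by
  have h := (Real.tendsto_pow_mul_exp_neg_atTop_nhds_zero j).comp
    (tendsto_id.const_mul_atTop hε)
  have h2 := h.const_mul (ε⁻¹ ^ j)
  rw [mul_zero] at h2
  refine h2.congr fun t => ?_
  simp only [Function.comp, id_eq]
  rw [show ε⁻¹ ^ j * ((ε * t) ^ j * Real.exp (-(ε * t)))
      = (ε⁻¹ * ε) ^ j * (t ^ j * Real.exp (-(ε * t))) by ring,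
    inv_mul_cancel₀ hε.ne', one_pow, one_mul]

variable {n : Type*} [Fintype n] [DecidableEq n]

lemma entry_norm_le (P : Matrix n n ℂ) (i j : n) : ‖P i j‖ ≤ ‖P‖ := by
  rw [Matrix.linfty_opNorm_def]
  have h1 : ‖P i j‖₊ ≤ ∑ j' : n, ‖P i j'‖₊ :=
    Finset.single_le_sum (f := fun j' => ‖P i j'‖₊) (fun _ _ => zero_le) (Finset.mem_univ j)
  have h2 : (∑ j' : n, ‖P i j'‖₊) ≤ Finset.univ.sup fun i => ∑ j' : n, ‖P i j'‖₊ :=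
    Finset.le_sup (f := fun i => ∑ j' : n, ‖P i j'‖₊) (Finset.mem_univ i)
  exact_mod_cast h1.trans h2

lemma norm_le_sum_sum (P : Matrix n n ℂ) : ‖P‖ ≤ ∑ i : n, ∑ j : n, ‖P i j‖ := by
  rw [Matrix.linfty_opNorm_def]
  have : (Finset.univ.sup fun i => ∑ j' : n, ‖P i j'‖₊) ≤ ∑ i : n, ∑ j : n, ‖P i j‖₊ :=
    Finset.sup_le fun i _ =>
      Finset.single_le_sum (f := fun i => ∑ j : n, ‖P i j‖₊) (fun _ _ => zero_le)
        (Finset.mem_univ i)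
  calc ((Finset.univ.sup fun i => ∑ j' : n, ‖P i j'‖₊ : NNReal) : ℝ)
      ≤ ((∑ i : n, ∑ j : n, ‖P i j‖₊ : NNReal) : ℝ) := by exact_mod_cast this
    _ = ∑ i : n, ∑ j : n, ‖P i j‖ := by push_cast; rfl

lemma spectrum_transpose (M : Matrix n n ℂ) : spectrum ℂ Mᵀ = spectrum ℂ M := by
  ext μ
  simp only [spectrum.mem_iff, not_iff_not, Matrix.isUnit_iff_isUnit_det]
  have : (algebraMap ℂ (Matrix n n ℂ)) μ - Mᵀ = ((algebraMap ℂ (Matrix n n ℂ)) μ - M)ᵀ := by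
    simp [Matrix.transpose_sub, Algebra.algebraMap_eq_smul_one, Matrix.transpose_smul]
  rw [this, Matrix.det_transpose]

variable {n : Type*} [Fintype n] [DecidableEq n]

/-- Matrix-vector multiplication as a continuous ℝ-linear map in the matrix. -/
noncomputable def mulVecCLM (x : n → ℂ) : Matrix n n ℂ →L[ℝ] (n → ℂ) :=
  LinearMap.toContinuousLinearMap
    { toFun := fun P => P *ᵥ x
      map_add' := fun P Q => Matrix.add_mulVec P Q x
      map_smul' := fun r P => Matrix.smul_mulVec r P x }

@[simp] lemma mulVecCLM_apply (x : n → ℂ) (P : Matrix n n ℂ) : mulVecCLM x P = P *ᵥ x := rfl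

lemma exp_mulVec_eq_sum (M : Matrix n n ℂ) (x : n → ℂ) (k : ℕ) (hk : M ^ k *ᵥ x = 0) (t : ℝ) :
    exp (t • M) *ᵥ x = ∑ j ∈ Finset.range k, ((t ^ j / j.factorial : ℝ)) • (M ^ j *ᵥ x) := by
  have hs : Summable (fun j : ℕ => (j.factorial : ℝ)⁻¹ • (t • M) ^ j) :=
    expSeries_summable' (𝕂 := ℝ) (t • M)
  have h1 : exp (t • M) *ᵥ x = ∑' j : ℕ, mulVecCLM x ((j.factorial : ℝ)⁻¹ • (t • M) ^ j) := by
    rw [exp_eq_tsum ℝ]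
    exact ((mulVecCLM x).map_tsum hs)
  have h2 : ∀ j : ℕ, mulVecCLM x ((j.factorial : ℝ)⁻¹ • (t • M) ^ j)
      = ((t ^ j / j.factorial : ℝ)) • (M ^ j *ᵥ x) := by
    intro j
    rw [mulVecCLM_apply, smul_pow, smul_mulVec, smul_mulVec, smul_smul,
      div_eq_inv_mul]
  have h3 : ∀ j ∉ Finset.range k, mulVecCLM x ((j.factorial : ℝ)⁻¹ • (t • M) ^ j) = 0 := by
    intro j hj
    rw [h2]
    have hkj : k ≤ j := by simpa using hj
    have : M ^ j *ᵥ x = 0 := by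
      rw [← Nat.sub_add_cancel hkj, pow_add, ← Matrix.mulVec_mulVec, hk, Matrix.mulVec_zero]
    rw [this, smul_zero]
  rw [h1, tsum_eq_sum h3]
  exact Finset.sum_congr rfl fun j _ => h2 j

lemma exp_smul_eq_exp_smul_sub (M : Matrix n n ℂ) (μ : ℂ) (t : ℝ) :
    exp (t • M) = Complex.exp (t * μ) • exp (t • (M - μ • (1 : Matrix n n ℂ))) := by
  have hsplit : t • M = ((t : ℂ) * μ) • (1 : Matrix n n ℂ) + t • (M - μ • (1 : Matrix n n ℂ)) := by
    rw [smul_sub, ← smul_assoc]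
    simp [smul_eq_mul]
  have hcomm : Commute (((t : ℂ) * μ) • (1 : Matrix n n ℂ)) (t • (M - μ • (1 : Matrix n n ℂ))) :=
    ((Commute.one_left _).smul_left _).smul_right _
  rw [hsplit, Matrix.exp_add_of_commute _ _ hcomm]
  have hscal : exp (((t : ℂ) * μ) • (1 : Matrix n n ℂ))
      = Complex.exp (t * μ) • (1 : Matrix n n ℂ) := by
    have : ((t : ℂ) * μ) • (1 : Matrix n n ℂ) = algebraMap ℂ (Matrix n n ℂ) ((t : ℂ) * μ) := by
      rw [Algebra.algebraMap_eq_smul_one]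
    rw [this]
    refine (map_exp (algebraMap ℂ (Matrix n n ℂ)) (by
        rw [show ⇑(algebraMap ℂ (Matrix n n ℂ)) = fun z : ℂ => z • (1 : Matrix n n ℂ) from
          funext fun z => (Algebra.algebraMap_eq_smul_one z)]
        exact (continuous_id.smul continuous_const)) _).symm.trans ?_
    rw [Algebra.algebraMap_eq_smul_one, Complex.exp_eq_exp_ℂ]
  rw [hscal, smul_mul_assoc, one_mul]

lemma tendsto_exp_mulVec (M : Matrix n n ℂ) {ε : ℝ} (hε : 0 < ε)
    (hspec : ∀ μ ∈ spectrum ℂ M, μ.re ≤ -(2*ε)) (x : n → ℂ) :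
    Tendsto (fun t : ℝ => Real.exp (ε * t) * ‖exp (t • M) *ᵥ x‖) atTop (𝓝 0) := by
  set f : Module.End ℂ (n → ℂ) := Matrix.toLinAlgEquiv' M with hf
  have hx : x ∈ ⨆ μ : ℂ, f.maxGenEigenspace μ := by
    rw [Module.End.iSup_maxGenEigenspace_eq_top]; trivial
  refine Submodule.iSup_induction (motive := fun x =>
      Tendsto (fun t : ℝ => Real.exp (ε * t) * ‖exp (t • M) *ᵥ x‖) atTop (𝓝 0))
    (fun μ => f.maxGenEigenspace μ) hx ?_ ?_ ?_
  · intro μ x hxmem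
    rcases eq_or_ne x 0 with rfl | hx0
    · simpa [Matrix.mulVec_zero] using
        (tendsto_const_nhds : Tendsto (fun _ : ℝ => (0:ℝ)) atTop (𝓝 0))
    obtain ⟨k, hk⟩ := (Module.End.mem_maxGenEigenspace f μ x).mp hxmem
    have hkpos : 0 < k := by
      rcases Nat.eq_zero_or_pos k with rfl | h
      · simp at hk; exact absurd hk hx0
      · exact h
    have hμ : μ ∈ spectrum ℂ M := by
      have hgen : f.HasGenEigenvalue μ k := by
        rw [Module.End.hasGenEigenvalue_iff]
        refine (Submodule.ne_bot_iff _).mpr ⟨x, ?_, hx0⟩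
        rw [Module.End.genEigenspace_nat]
        exact LinearMap.mem_ker.mpr hk
      have h2 := (Module.End.hasEigenvalue_of_hasGenEigenvalue hgen).mem_spectrum
      rwa [hf, AlgEquiv.spectrum_eq] at h2
    have hker : (M - μ • 1) ^ k *ᵥ x = 0 := by
      have hmap : Matrix.toLinAlgEquiv' ((M - μ • (1 : Matrix n n ℂ)) ^ k)
          = (f - μ • 1) ^ k := by
        rw [show (μ • (1 : Matrix n n ℂ)) = algebraMap ℂ _ μ from
            (Algebra.algebraMap_eq_smul_one μ).symm,
          show (μ • (1 : Module.End ℂ (n → ℂ))) = algebraMap ℂ _ μ from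
            (Algebra.algebraMap_eq_smul_one μ).symm,
          map_pow, map_sub, AlgEquiv.commutes]
      calc (M - μ • 1) ^ k *ᵥ x
          = (Matrix.toLinAlgEquiv' ((M - μ • (1 : Matrix n n ℂ)) ^ k)) x := by
            rw [Matrix.toLinAlgEquiv'_apply]
        _ = ((f - μ • 1) ^ k) x := by rw [hmap]
        _ = 0 := hk
    have hexp : ∀ t : ℝ, exp (t • M) *ᵥ x
        = Complex.exp (t * μ) • ∑ j ∈ Finset.range k,
            ((t ^ j / j.factorial : ℝ)) • ((M - μ • 1) ^ j *ᵥ x) := by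
      intro t
      rw [exp_smul_eq_exp_smul_sub M μ t, Matrix.smul_mulVec,
        exp_mulVec_eq_sum (M - μ • 1) x k hker t]
    have hupper : Tendsto (fun t : ℝ => ∑ j ∈ Finset.range k,
        (‖(M - μ • 1) ^ j *ᵥ x‖ / j.factorial) * (t ^ j * Real.exp (-(ε * t))))
        atTop (𝓝 0) := by
      have h3 := tendsto_finset_sum (Finset.range k)
        (fun j _ => (tendsto_pow_mul_exp_neg_mul j hε).const_mul
          (‖(M - μ • 1) ^ j *ᵥ x‖ / j.factorial))
      simpa using h3
    refine squeeze_zero' ?_ ?_ hupper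
    · filter_upwards with t; positivity
    · filter_upwards [eventually_ge_atTop (0:ℝ)] with t ht
      rw [hexp t]
      have h1 : ‖Complex.exp ((t:ℂ) * μ) • ∑ j ∈ Finset.range k,
          ((t ^ j / j.factorial : ℝ)) • ((M - μ • 1) ^ j *ᵥ x)‖
          = Real.exp (t * μ.re) * ‖∑ j ∈ Finset.range k,
          ((t ^ j / j.factorial : ℝ)) • ((M - μ • 1) ^ j *ᵥ x)‖ := by
        rw [norm_smul, Complex.norm_exp]
        congr 2
        simp [Complex.mul_re]
      have h2 : ‖∑ j ∈ Finset.range k, ((t ^ j / j.factorial : ℝ)) • ((M - μ • 1) ^ j *ᵥ x)‖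
          ≤ ∑ j ∈ Finset.range k, (t ^ j / j.factorial) * ‖(M - μ • 1) ^ j *ᵥ x‖ := by
        refine (norm_sum_le _ _).trans (Finset.sum_le_sum fun j _ => ?_)
        rw [norm_smul, Real.norm_eq_abs, abs_of_nonneg (by positivity)]
      have hexpo : ε * t + t * μ.re ≤ -(ε * t) := by
        have h4 := hspec μ hμ
        nlinarith
      calc Real.exp (ε * t) * ‖Complex.exp ((t:ℂ) * μ) • ∑ j ∈ Finset.range k,
            ((t ^ j / j.factorial : ℝ)) • ((M - μ • 1) ^ j *ᵥ x)‖
          = Real.exp (ε * t + t * μ.re) * ‖∑ j ∈ Finset.range k,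
            ((t ^ j / j.factorial : ℝ)) • ((M - μ • 1) ^ j *ᵥ x)‖ := by
            rw [h1, Real.exp_add]; ring
        _ ≤ Real.exp (-(ε * t)) * ∑ j ∈ Finset.range k,
            (t ^ j / j.factorial) * ‖(M - μ • 1) ^ j *ᵥ x‖ := by
            exact mul_le_mul (Real.exp_le_exp.mpr hexpo) h2 (norm_nonneg _) (Real.exp_pos _).le
        _ = ∑ j ∈ Finset.range k,
            (‖(M - μ • 1) ^ j *ᵥ x‖ / j.factorial) * (t ^ j * Real.exp (-(ε * t))) := by
            rw [Finset.mul_sum]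
            exact Finset.sum_congr rfl fun j _ => by ring
  · simpa [Matrix.mulVec_zero] using
      (tendsto_const_nhds : Tendsto (fun _ : ℝ => (0:ℝ)) atTop (𝓝 0))
  · intro x y hx hy
    refine squeeze_zero' (by filter_upwards with t; positivity) ?_ (by simpa using hx.add hy)
    filter_upwards with t
    rw [Matrix.mulVec_add]
    calc Real.exp (ε * t) * ‖exp (t • M) *ᵥ x + exp (t • M) *ᵥ y‖
        ≤ Real.exp (ε * t) * (‖exp (t • M) *ᵥ x‖ + ‖exp (t • M) *ᵥ y‖) := by
          gcongr; exact norm_add_le _ _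
      _ = Real.exp (ε * t) * ‖exp (t • M) *ᵥ x‖ + Real.exp (ε * t) * ‖exp (t • M) *ᵥ y‖ := by
          ring

lemma exists_decay (M : Matrix n n ℂ) (hM : ∀ μ ∈ spectrum ℂ M, μ.re < 0) :
    ∃ ε : ℝ, 0 < ε ∧ ∃ c : ℝ, ∀ t : ℝ, 0 ≤ t → ‖exp (t • M)‖ ≤ c * Real.exp (-(ε * t)) := by
  rcases isEmpty_or_nonempty n with hn | hn
  · refine ⟨1, one_pos, 0, fun t _ => ?_⟩
    have h0 : exp (t • M) = 0 := Subsingleton.elim _ _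
    rw [h0, norm_zero, zero_mul]
  · obtain ⟨μ₀, hμ₀, hmax⟩ := (spectrum.isCompact (𝕜 := ℂ) M).exists_isMaxOn
      (spectrum.nonempty M) (Complex.continuous_re.continuousOn)
    have hμ₀neg := hM μ₀ hμ₀
    set ε := -μ₀.re / 2 with hεdef
    have hε : 0 < ε := by simp only [hεdef]; linarith
    have hspec : ∀ μ ∈ spectrum ℂ M, μ.re ≤ -(2 * ε) := by
      intro μ hμ
      have h5 : μ.re ≤ μ₀.re := hmax hμ
      simp only [hεdef]; linarith
    have hentry : ∀ i j : n, Tendsto (fun t : ℝ => Real.exp (ε * t) * ‖exp (t • M) i j‖)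
        atTop (𝓝 0) := by
      intro i j
      refine squeeze_zero' (by filter_upwards with t; positivity) ?_
        (tendsto_exp_mulVec M hε hspec (Pi.single j 1))
      filter_upwards with t
      gcongr
      have h6 : (exp (t • M) *ᵥ Pi.single j 1) i = exp (t • M) i j := by
        simp [Matrix.mulVec_single]
      rw [← h6]
      exact norm_le_pi_norm _ i
    have hmat : Tendsto (fun t : ℝ => Real.exp (ε * t) * ‖exp (t • M)‖) atTop (𝓝 0) := by
      have hupper : Tendsto (fun t : ℝ => ∑ i : n, ∑ j : n,
          Real.exp (ε * t) * ‖exp (t • M) i j‖) atTop (𝓝 0) := by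
        have h7 := tendsto_finset_sum (Finset.univ : Finset n)
          (fun i _ => tendsto_finset_sum (Finset.univ : Finset n) (fun j _ => hentry i j))
        simpa using h7
      refine squeeze_zero' (by filter_upwards with t; positivity) ?_ hupper
      filter_upwards with t
      calc Real.exp (ε * t) * ‖exp (t • M)‖
          ≤ Real.exp (ε * t) * ∑ i : n, ∑ j : n, ‖exp (t • M) i j‖ := by
            gcongr; exact norm_le_sum_sum _
        _ = ∑ i : n, ∑ j : n, Real.exp (ε * t) * ‖exp (t • M) i j‖ := by
            rw [Finset.mul_sum]; exact Finset.sum_congr rfl fun i _ => Finset.mul_sum _ _ _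
    obtain ⟨T, hT⟩ := eventually_atTop.mp (hmat.eventually_lt_const one_pos)
    have hcont : Continuous (fun t : ℝ => Real.exp (ε * t) * ‖exp (t • M)‖) := by
      refine Continuous.mul (Real.continuous_exp.comp (continuous_const.mul continuous_id)) ?_
      exact continuous_norm.comp (exp_continuous.comp (continuous_id.smul continuous_const))
    obtain ⟨c₀, hc₀⟩ := (isCompact_Icc (a := (0:ℝ)) (b := T)).exists_bound_of_continuousOn
      hcont.continuousOn
    refine ⟨ε, hε, max c₀ 1, fun t ht => ?_⟩
    have hkey : Real.exp (ε * t) * ‖exp (t • M)‖ ≤ max c₀ 1 := by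
      rcases le_total t T with h | h
      · have h8 := hc₀ t ⟨ht, h⟩
        rw [Real.norm_eq_abs] at h8
        exact le_trans (le_trans (le_abs_self _) h8) (le_max_left _ _)
      · exact le_trans (hT t h).le (le_max_right _ _)
    calc ‖exp (t • M)‖
        = Real.exp (-(ε * t)) * (Real.exp (ε * t) * ‖exp (t • M)‖) := by
          rw [← mul_assoc, ← Real.exp_add]; simp
      _ ≤ Real.exp (-(ε * t)) * max c₀ 1 := by gcongr
      _ = max c₀ 1 * Real.exp (-(ε * t)) := mul_comm _ _

lemma isUnit_smul_one_sub (M : Matrix n n ℂ) (hM : ∀ μ ∈ spectrum ℂ M, μ.re < 0) (ω : ℝ) :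
    IsUnit ((Complex.I * ω) • (1 : Matrix n n ℂ) - M) := by
  by_contra h
  have h1 : ((Complex.I * ω) • (1 : Matrix n n ℂ) - M)
      = algebraMap ℂ (Matrix n n ℂ) (Complex.I * ω) - M := by
    rw [Algebra.algebraMap_eq_smul_one]
  rw [h1] at h
  have h2 : (Complex.I * ω : ℂ) ∈ spectrum ℂ M := spectrum.mem_iff.mpr h
  have h3 := hM _ h2
  simp [Complex.mul_re] at h3

lemma exp_rep (M : Matrix n n ℂ) (ω : ℝ) (t : ℝ) :
    Complex.exp (-(Complex.I * ω * t)) • exp (t • M)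
      = exp (t • ((-(Complex.I * ω)) • (1 : Matrix n n ℂ) + M)) := by
  have h := exp_smul_eq_exp_smul_sub ((-(Complex.I * ω)) • (1 : Matrix n n ℂ) + M)
    (-(Complex.I * ω)) t
  rw [add_sub_cancel_left] at h
  rw [h]
  congr 1
  congr 1
  ring

lemma laplace (M : Matrix n n ℂ) (hM : ∀ μ ∈ spectrum ℂ M, μ.re < 0) (ω : ℝ) :
    IntegrableOn (fun t : ℝ => Complex.exp (-(Complex.I * ω * t)) • exp (t • M))
      (Ioi 0) volume
    ∧ ∫ t in Ioi (0:ℝ), Complex.exp (-(Complex.I * ω * t)) • exp (t • M)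
        = ((Complex.I * ω) • (1 : Matrix n n ℂ) - M)⁻¹ := by
  obtain ⟨ε, hε, c, hc⟩ := exists_decay M hM
  set R : Matrix n n ℂ := (Complex.I * ω) • (1 : Matrix n n ℂ) - M with hR
  have hU : IsUnit R := isUnit_smul_one_sub M hM ω
  have hUdet : IsUnit R.det := (Matrix.isUnit_iff_isUnit_det R).mp hU
  set g : ℝ → Matrix n n ℂ := fun t => Complex.exp (-(Complex.I * ω * t)) • exp (t • M)
    with hgdef
  have hgnorm : ∀ t : ℝ, ‖g t‖ = ‖exp (t • M)‖ := by
    intro t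
    rw [hgdef]
    simp only [norm_smul, Complex.norm_exp]
    have h0 : (-(Complex.I * ω * t)).re = 0 := by simp [Complex.mul_re]
    rw [h0, Real.exp_zero, one_mul]
  have hgcont : Continuous g := by
    refine Continuous.fun_smul ?_ (exp_continuous.comp (continuous_id.smul
      (continuous_const : Continuous fun _ : ℝ => M)))
    exact Complex.continuous_exp.comp
      ((continuous_const.mul Complex.continuous_ofReal).neg)
  have hgint : IntegrableOn g (Ioi 0) volume := by
    refine Integrable.mono' (g := fun t => c * Real.exp (-ε * t)) ?_
      hgcont.aestronglyMeasurable.restrict ?_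
    · exact (exp_neg_integrableOn_Ioi 0 hε).const_mul c
    · rw [ae_restrict_iff' measurableSet_Ioi]
      filter_upwards with t ht
      rw [hgnorm t, neg_mul]
      exact hc t (le_of_lt ht)
  have hgzero : Tendsto g atTop (𝓝 0) := by
    have hbound : Tendsto (fun t : ℝ => c * Real.exp (-(ε * t))) atTop (𝓝 0) := by
      have h2 : Tendsto (fun t : ℝ => -(ε * t)) atTop atBot :=
        tendsto_neg_atBot_iff.mpr (tendsto_id.const_mul_atTop hε)
      have h3 := Real.tendsto_exp_atBot.comp h2
      simpa using h3.const_mul c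
    refine squeeze_zero_norm' ?_ hbound
    filter_upwards [eventually_ge_atTop (0:ℝ)] with t ht
    rw [hgnorm t]; exact hc t ht
  set M' : Matrix n n ℂ := (-(Complex.I * ω)) • (1 : Matrix n n ℂ) + M with hM'
  have hrep : ∀ t : ℝ, g t = exp (t • M') := fun t => exp_rep M ω t
  have hM'R : M' = -R := by rw [hR, hM', neg_sub, sub_eq_add_neg, neg_smul]; exact add_comm _ _
  set F : ℝ → Matrix n n ℂ := fun t => -(R⁻¹ * g t) with hF
  have hderiv : ∀ t : ℝ, HasDerivAt F (g t) t := by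
    intro t
    have h1 : HasDerivAt (fun u : ℝ => exp (u • M')) (M' * exp (t • M')) t :=
      hasDerivAt_exp_smul_const' M' t
    have h2 : HasDerivAt (fun u : ℝ => -(R⁻¹ * exp (u • M')))
        (-(R⁻¹ * (M' * exp (t • M')))) t := (h1.const_mul (R⁻¹)).neg
    have h3 : -(R⁻¹ * (M' * exp (t • M'))) = g t := by
      rw [hrep t, hM'R, neg_mul, mul_neg, neg_neg, ← mul_assoc,
        Matrix.nonsing_inv_mul R hUdet, one_mul]
    have h4 : F = fun u : ℝ => -(R⁻¹ * exp (u • M')) := by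
      funext u; simp only [hF]; rw [hrep u]
    rw [h4, ← h3]
    exact h2
  have hF0 : F 0 = -R⁻¹ := by
    have hg0 : g 0 = 1 := by
      rw [hgdef]
      simp
    rw [hF]; simp only []; rw [hg0, mul_one]
  have hFtend : Tendsto F atTop (𝓝 0) := by
    have hcont2 : Continuous (fun P : Matrix n n ℂ => -(R⁻¹ * P)) :=
      (continuous_const.mul continuous_id).neg
    have h5 := (hcont2.tendsto 0).comp hgzero
    simp only [mul_zero, neg_zero] at h5
    exact h5
  have hFc : ContinuousWithinAt F (Ici 0) 0 :=
    ((continuous_const.mul hgcont).neg).continuousWithinAt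
  have key := integral_Ioi_of_hasDerivAt_of_tendsto hFc (fun x _ => hderiv x) hgint hFtend
  refine ⟨hgint, ?_⟩
  rw [key, hF0]
  simp

variable {p : Type*} [Fintype p]

/-- `P ↦ (L * P * Rt) i j` as a continuous linear map. -/
noncomputable def sandCLM (L : Matrix p n ℂ) (Rt : Matrix n p ℂ) (i j : p) :
    Matrix n n ℂ →L[ℝ] ℂ :=
  LinearMap.toContinuousLinearMap
    { toFun := fun P => (L * P * Rt) i j
      map_add' := by
        intro P Q
        simp [Matrix.mul_add, Matrix.add_mul, Matrix.add_apply]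
      map_smul' := by
        intro r P
        simp [Matrix.mul_smul, Matrix.smul_mul, Matrix.smul_apply] }

@[simp] lemma sandCLM_apply (L : Matrix p n ℂ) (Rt : Matrix n p ℂ) (i j : p)
    (P : Matrix n n ℂ) : sandCLM L Rt i j P = (L * P * Rt) i j := rfl

lemma map_exp_aux (A : Matrix n n ℝ) (t : ℝ) :
    (exp (t • A)).map (algebraMap ℝ ℂ) = exp (t • A.map (algebraMap ℝ ℂ)) := by
  have hcont : Continuous fun P : Matrix n n ℝ =>
      ((algebraMap ℝ ℂ).mapMatrix P : Matrix n n ℂ) := by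
    simp only [RingHom.mapMatrix_apply]
    exact continuous_pi fun i => continuous_pi fun j =>
      Complex.continuous_ofReal.comp ((continuous_apply j).comp (continuous_apply i))
  have h := map_exp ((algebraMap ℝ ℂ).mapMatrix : Matrix n n ℝ →+* Matrix n n ℂ)
    hcont (t • A)
  have h2 : ((algebraMap ℝ ℂ).mapMatrix (t • A) : Matrix n n ℂ)
      = t • A.map (algebraMap ℝ ℂ) := by
    ext i j
    simp [RingHom.mapMatrix_apply, Matrix.map_apply, Matrix.smul_apply, smul_eq_mul,
      Complex.real_smul]
  rw [h2] at h
  simp only [RingHom.mapMatrix_apply] at h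
  exact h

end SpecDen

/-- Spectral density of the output of a stable continuous-time state space model: with
`Γ₀ = ∫₀^∞ e^{Au} B Σ Bᵀ e^{Aᵀu} du` satisfying the Lyapunov equation
`A Γ₀ + Γ₀ Aᵀ = -B Σ Bᵀ`, and autocovariance `γ(h) = C e^{Ah} Γ₀ Cᵀ` for `h ≥ 0`,
`γ(h) = C Γ₀ e^{-Aᵀ h} Cᵀ` for `h < 0`, one has
`(2π)⁻¹ C (iω I - A)⁻¹ B Σ Bᵀ (-iω I - Aᵀ)⁻¹ Cᵀ = (2π)⁻¹ ∫ e^{-iωh} γ(h) dh` for all `ω`. -/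
theorem transfer_function_eq_fourier_autocovariance
    (N m d : ℕ) (A : Matrix (Fin N) (Fin N) ℝ) (B : Matrix (Fin N) (Fin m) ℝ)
    (C : Matrix (Fin d) (Fin N) ℝ) (Sig : Matrix (Fin m) (Fin m) ℝ)
    (hSig : Sig.PosSemidef)
    (hA : ∀ μ ∈ spectrum ℂ (A.map (algebraMap ℝ ℂ)), μ.re < 0)
    (Γ₀ : Matrix (Fin N) (Fin N) ℝ)
    (hΓ₀ : Γ₀ = Matrix.of fun i j =>
      ∫ u in Set.Ioi (0 : ℝ),
        (NormedSpace.exp (u • A) * B * Sig * Bᵀ * NormedSpace.exp (u • Aᵀ)) i j)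
    (hLyap : A * Γ₀ + Γ₀ * Aᵀ = -(B * Sig * Bᵀ))
    (γ : ℝ → Matrix (Fin d) (Fin d) ℝ)
    (hγ : ∀ h : ℝ, γ h = if 0 ≤ h then C * NormedSpace.exp (h • A) * Γ₀ * Cᵀ
      else C * Γ₀ * NormedSpace.exp ((-h) • Aᵀ) * Cᵀ) :
    ∀ ω : ℝ,
      ((2 * Real.pi : ℂ))⁻¹ •
        (C.map (algebraMap ℝ ℂ) *
          ((Complex.I * ω) • (1 : Matrix (Fin N) (Fin N) ℂ) - A.map (algebraMap ℝ ℂ))⁻¹ *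
          B.map (algebraMap ℝ ℂ) * Sig.map (algebraMap ℝ ℂ) * (B.map (algebraMap ℝ ℂ))ᵀ *
          ((-(Complex.I * ω)) • (1 : Matrix (Fin N) (Fin N) ℂ) - (A.map (algebraMap ℝ ℂ))ᵀ)⁻¹ *
          (C.map (algebraMap ℝ ℂ))ᵀ) =
      ((2 * Real.pi : ℂ))⁻¹ •
        Matrix.of (fun i j => ∫ t : ℝ, Complex.exp (-(Complex.I * ω * t)) * (γ t i j : ℂ)) := by
  intro ω
  classical
  set Aℂ := A.map (algebraMap ℝ ℂ) with hAℂ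
  set Bℂ := B.map (algebraMap ℝ ℂ) with hBℂ
  set Cℂ := C.map (algebraMap ℝ ℂ) with hCℂ
  set Sigℂ := Sig.map (algebraMap ℝ ℂ) with hSigc
  set Γℂ := Γ₀.map (algebraMap ℝ ℂ) with hΓℂ
  have hAT : ∀ μ ∈ spectrum ℂ (Aℂᵀ), μ.re < 0 := by
    rw [SpecDen.spectrum_transpose]; exact hA
  obtain ⟨hintP, hvalP⟩ := SpecDen.laplace Aℂ hA ω
  obtain ⟨hintM, hvalM⟩ := SpecDen.laplace Aℂᵀ hAT (-ω)
  have hcast : ((-ω : ℝ) : ℂ) = -(ω : ℂ) := by push_cast; ring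
  rw [hcast] at hintM hvalM
  have hcast2 : (Complex.I * -(ω : ℂ)) = -(Complex.I * ω) := by ring
  rw [hcast2] at hintM hvalM
  set R := (Complex.I * (ω : ℂ)) • (1 : Matrix (Fin N) (Fin N) ℂ) - Aℂ with hRdef
  set S := (-(Complex.I * (ω : ℂ))) • (1 : Matrix (Fin N) (Fin N) ℂ) - Aℂᵀ with hSdef
  have hUR : IsUnit R := by rw [hRdef]; exact SpecDen.isUnit_smul_one_sub Aℂ hA ω
  have hUS : IsUnit S := by
    have h := SpecDen.isUnit_smul_one_sub Aℂᵀ hAT (-ω)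
    rwa [hcast, hcast2] at h
  have hUdetR : IsUnit R.det := (Matrix.isUnit_iff_isUnit_det R).mp hUR
  have hUdetS : IsUnit S.det := (Matrix.isUnit_iff_isUnit_det S).mp hUS
  have hL : Aℂ * Γℂ + Γℂ * Aℂᵀ = -(Bℂ * Sigℂ * Bℂᵀ) := by
    ext i j
    have h2 : (A * Γ₀ + Γ₀ * Aᵀ) i j = (-(B * Sig * Bᵀ)) i j := by rw [hLyap]
    simp only [Matrix.add_apply, Matrix.mul_apply, Matrix.neg_apply, Matrix.transpose_apply,
      hAℂ, hBℂ, hΓℂ, hSigc, Matrix.map_apply] at h2 ⊢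
    exact_mod_cast h2
  have key : R * Γℂ + Γℂ * S = Bℂ * Sigℂ * Bℂᵀ := by
    rw [hRdef, hSdef, sub_mul, mul_sub, Matrix.smul_mul, one_mul, Matrix.mul_smul, mul_one]
    have h9 : (Complex.I * (ω:ℂ)) • Γℂ - Aℂ * Γℂ + ((-(Complex.I * (ω:ℂ))) • Γℂ - Γℂ * Aℂᵀ)
        = -(Aℂ * Γℂ + Γℂ * Aℂᵀ) := by
      rw [neg_smul]; abel
    rw [h9, hL, neg_neg]
  have hinv : R⁻¹ * (Bℂ * Sigℂ * Bℂᵀ) * S⁻¹ = R⁻¹ * Γℂ + Γℂ * S⁻¹ := by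
    have e1 : R⁻¹ * (R * Γℂ) = Γℂ := by
      rw [← Matrix.mul_assoc, Matrix.nonsing_inv_mul R hUdetR, Matrix.one_mul]
    have e2 : R⁻¹ * (Γℂ * S) * S⁻¹ = R⁻¹ * Γℂ := by
      simp only [Matrix.mul_assoc]
      rw [Matrix.mul_nonsing_inv S hUdetS, Matrix.mul_one]
    calc R⁻¹ * (Bℂ * Sigℂ * Bℂᵀ) * S⁻¹ = R⁻¹ * (R * Γℂ + Γℂ * S) * S⁻¹ := by rw [key]
      _ = R⁻¹ * (R * Γℂ) * S⁻¹ + R⁻¹ * (Γℂ * S) * S⁻¹ := by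
          rw [Matrix.mul_add, Matrix.add_mul]
      _ = Γℂ * S⁻¹ + R⁻¹ * Γℂ := by rw [e1, e2]
      _ = R⁻¹ * Γℂ + Γℂ * S⁻¹ := add_comm _ _
  have hRHS : (Matrix.of (fun i j => ∫ t : ℝ,
        Complex.exp (-(Complex.I * ω * t)) * (γ t i j : ℂ)) : Matrix (Fin d) (Fin d) ℂ)
      = Cℂ * (R⁻¹ * Γℂ + Γℂ * S⁻¹) * Cℂᵀ := by
    ext i j
    rw [Matrix.of_apply]
    set Fo : ℝ → ℂ := fun t => Complex.exp (-(Complex.I * ω * t)) * (γ t i j : ℂ) with hFo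
    set FP : ℝ → ℂ := fun t => SpecDen.sandCLM Cℂ (Γℂ * Cℂᵀ) i j
        (Complex.exp (-(Complex.I * ω * t)) • NormedSpace.exp (t • Aℂ)) with hFPdef
    set FM : ℝ → ℂ := fun t => SpecDen.sandCLM (Cℂ * Γℂ) Cℂᵀ i j
        (Complex.exp (-(-(Complex.I * ω) * t)) • NormedSpace.exp (t • Aℂᵀ)) with hFMdef
    have hFPint : MeasureTheory.IntegrableOn FP (Set.Ioi 0) MeasureTheory.volume :=
      (SpecDen.sandCLM Cℂ (Γℂ * Cℂᵀ) i j).integrable_comp hintP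
    have hFMint : MeasureTheory.IntegrableOn FM (Set.Ioi 0) MeasureTheory.volume :=
      (SpecDen.sandCLM (Cℂ * Γℂ) Cℂᵀ i j).integrable_comp hintM
    have hEqP : Set.EqOn Fo FP (Set.Ioi 0) := by
      intro t ht
      have ht' : (0:ℝ) ≤ t := le_of_lt ht
      simp only [hFo, hFPdef, SpecDen.sandCLM_apply]
      rw [hγ t, if_pos ht']
      have hmap : (C * NormedSpace.exp (t • A) * Γ₀ * Cᵀ).map (algebraMap ℝ ℂ)
          = Cℂ * NormedSpace.exp (t • Aℂ) * Γℂ * Cℂᵀ := by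
        rw [Matrix.map_mul, Matrix.map_mul, Matrix.map_mul, SpecDen.map_exp_aux,
          Matrix.transpose_map, hAℂ, hCℂ, hΓℂ]
      have hcoe : (((C * NormedSpace.exp (t • A) * Γ₀ * Cᵀ) i j : ℝ) : ℂ)
          = (Cℂ * NormedSpace.exp (t • Aℂ) * Γℂ * Cℂᵀ) i j := by
        rw [← hmap]; rfl
      rw [hcoe]
      simp only [Matrix.mul_smul, Matrix.smul_mul, Matrix.smul_apply, smul_eq_mul,
        Matrix.mul_assoc]
    have hEqM : Set.EqOn (fun t => Fo (-t)) FM (Set.Ioi 0) := by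
      intro t ht
      have ht' : (-t : ℝ) < 0 := neg_neg_iff_pos.mpr ht
      simp only [hFo, hFMdef, SpecDen.sandCLM_apply]
      rw [hγ (-t), if_neg (not_le.mpr ht'), neg_neg]
      have hmap : (C * Γ₀ * NormedSpace.exp (t • Aᵀ) * Cᵀ).map (algebraMap ℝ ℂ)
          = Cℂ * Γℂ * NormedSpace.exp (t • Aℂᵀ) * Cℂᵀ := by
        rw [Matrix.map_mul, Matrix.map_mul, Matrix.map_mul, SpecDen.map_exp_aux,
          Matrix.transpose_map, Matrix.transpose_map, hAℂ, hCℂ, hΓℂ]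
      have hcoe : (((C * Γ₀ * NormedSpace.exp (t • Aᵀ) * Cᵀ) i j : ℝ) : ℂ)
          = (Cℂ * Γℂ * NormedSpace.exp (t • Aℂᵀ) * Cℂᵀ) i j := by
        rw [← hmap]; rfl
      rw [hcoe, show (-(Complex.I * (ω:ℂ) * ((-t : ℝ) : ℂ))) = -(-(Complex.I * (ω:ℂ)) * (t:ℂ))
        by push_cast; ring]
      simp only [Matrix.mul_smul, Matrix.smul_mul, Matrix.smul_apply, smul_eq_mul,
        Matrix.mul_assoc]
    have hIoiP : MeasureTheory.IntegrableOn Fo (Set.Ioi 0) MeasureTheory.volume :=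
      hFPint.congr_fun hEqP.symm measurableSet_Ioi
    have hIci : MeasureTheory.IntegrableOn Fo (Set.Ici 0) MeasureTheory.volume :=
      (integrableOn_Ici_iff_integrableOn_Ioi enorm_ne_top).mpr hIoiP
    have hIoiM : MeasureTheory.IntegrableOn (fun t => Fo (-t)) (Set.Ioi 0)
        MeasureTheory.volume := hFMint.congr_fun hEqM.symm measurableSet_Ioi
    have hIio : MeasureTheory.IntegrableOn Fo (Set.Iio 0) MeasureTheory.volume := by
      have hpre : ((fun x : ℝ => -x) ⁻¹' (Set.Iio 0)) = Set.Ioi 0 := by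
        ext x; simp
      have h10 : MeasureTheory.IntegrableOn (Fo ∘ (fun x : ℝ => -x))
          ((fun x : ℝ => -x) ⁻¹' (Set.Iio 0)) MeasureTheory.volume := by
        rw [hpre]; exact hIoiM
      exact (MeasureTheory.MeasurePreserving.integrableOn_comp_preimage
        (MeasureTheory.Measure.measurePreserving_neg MeasureTheory.volume)
        (Homeomorph.neg ℝ).measurableEmbedding).mp h10
    have hsplit := intervalIntegral.integral_Iio_add_Ici (μ := MeasureTheory.volume)
      (b := (0:ℝ)) hIio hIci
    rw [show (∫ t : ℝ, Fo t) = (∫ t in Set.Iio (0:ℝ), Fo t) + ∫ t in Set.Ici (0:ℝ), Fo t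
      from hsplit.symm]
    have hP : ∫ t in Set.Ici (0:ℝ), Fo t = (Cℂ * R⁻¹ * (Γℂ * Cℂᵀ)) i j := by
      rw [MeasureTheory.integral_Ici_eq_integral_Ioi,
        MeasureTheory.setIntegral_congr_fun measurableSet_Ioi hEqP]
      calc ∫ t in Set.Ioi (0:ℝ), FP t
          = SpecDen.sandCLM Cℂ (Γℂ * Cℂᵀ) i j (∫ t in Set.Ioi (0:ℝ),
              Complex.exp (-(Complex.I * ω * t)) • NormedSpace.exp (t • Aℂ)) :=
            (SpecDen.sandCLM Cℂ (Γℂ * Cℂᵀ) i j).integral_comp_comm hintP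
        _ = (Cℂ * R⁻¹ * (Γℂ * Cℂᵀ)) i j := by rw [hvalP]; rfl
    have hM2 : ∫ t in Set.Iio (0:ℝ), Fo t = ((Cℂ * Γℂ) * S⁻¹ * Cℂᵀ) i j := by
      have h12 := integral_comp_neg_Ioi (c := (0:ℝ)) (f := Fo)
      rw [neg_zero] at h12
      rw [show (∫ t in Set.Iio (0:ℝ), Fo t) = ∫ t in Set.Iic (0:ℝ), Fo t from
          (MeasureTheory.integral_Iic_eq_integral_Iio).symm,
        ← h12, MeasureTheory.setIntegral_congr_fun measurableSet_Ioi hEqM]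
      calc ∫ t in Set.Ioi (0:ℝ), FM t
          = SpecDen.sandCLM (Cℂ * Γℂ) Cℂᵀ i j (∫ t in Set.Ioi (0:ℝ),
              Complex.exp (-(-(Complex.I * ω) * t)) • NormedSpace.exp (t • Aℂᵀ)) :=
            (SpecDen.sandCLM (Cℂ * Γℂ) Cℂᵀ i j).integral_comp_comm hintM
        _ = ((Cℂ * Γℂ) * S⁻¹ * Cℂᵀ) i j := by rw [hvalM]; rfl
    rw [hP, hM2]
    have hre : Cℂ * (R⁻¹ * Γℂ + Γℂ * S⁻¹) * Cℂᵀ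
        = Cℂ * R⁻¹ * (Γℂ * Cℂᵀ) + Cℂ * Γℂ * S⁻¹ * Cℂᵀ := by
      rw [Matrix.mul_add, Matrix.add_mul]; simp only [Matrix.mul_assoc]
    rw [hre, Matrix.add_apply]
    ring
  have hLHS : Cℂ * R⁻¹ * Bℂ * Sigℂ * Bℂᵀ * S⁻¹ * Cℂᵀ = Cℂ * (R⁻¹ * Γℂ + Γℂ * S⁻¹) * Cℂᵀ := by
    rw [show Cℂ * (R⁻¹ * Γℂ + Γℂ * S⁻¹) * Cℂᵀ
        = Cℂ * (R⁻¹ * (Bℂ * Sigℂ * Bℂᵀ) * S⁻¹) * Cℂᵀ by rw [hinv]]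
    simp only [Matrix.mul_assoc]
  rw [hLHS, hRHS]
end
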